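/- arXiv:2507.18045 — 11 statements merged into one kernel-verified Lean document; each statement's English description precedes it below -/
import Mathlib

section
/- Let p be a prime with p ≡ 1 (mod 8). Then there exists a pair of integers (a, b) with p = a² + 2b² and a ≡ 1 (mod 4); moreover, this pair is unique up to the sign of b, i.e., if (a, b) and (a', b') are two pairs of integers with p = a² + 2b², a ≡ 1 (mod 4), p = a'² + 2b'², a' ≡ 1 (mod 4), then a = a' and b = b' or b = −b'. -/
set_option maxHeartbeats 1000000

private lemma descent_step (p : ℕ) (hp : p.Prime) :
    ∀ m : ℕ, 0 < m → m < p → (∃ a b : ℤ, ((m : ℤ) * p) = a ^ 2 + 2 * b ^ 2) →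
      ∃ a b : ℤ, (p : ℤ) = a ^ 2 + 2 * b ^ 2 := by
  intro m
  induction m using Nat.strong_induction_on with
  | _ m ih =>
    intro hm hmp ⟨a, b, hab⟩
    rcases eq_or_lt_of_le (show 1 ≤ m from hm) with h1 | h2
    · refine ⟨a, b, ?_⟩
      rw [← h1] at hab
      push_cast at hab ⊢
      linarith
    -- m ≥ 2
    haveI : NeZero m := ⟨by omega⟩
    set a₁ : ℤ := (a : ZMod m).valMinAbs with ha₁def
    set b₁ : ℤ := (b : ZMod m).valMinAbs with hb₁def
    have ha : (m : ℤ) ∣ a - a₁ := by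
      rw [← ZMod.intCast_zmod_eq_zero_iff_dvd]
      push_cast
      rw [ZMod.coe_valMinAbs]
      ring
    have hb : (m : ℤ) ∣ b - b₁ := by
      rw [← ZMod.intCast_zmod_eq_zero_iff_dvd]
      push_cast
      rw [ZMod.coe_valMinAbs]
      ring
    have ha₁le : a₁.natAbs ≤ m / 2 := ZMod.natAbs_valMinAbs_le _
    have hb₁le : b₁.natAbs ≤ m / 2 := ZMod.natAbs_valMinAbs_le _
    have ha₁sq : a₁ ^ 2 ≤ ((m : ℤ) / 2) ^ 2 := by
      rw [← Int.natAbs_sq a₁]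
      have h1 : (a₁.natAbs : ℤ) ≤ (m : ℤ) / 2 := by
        have := Int.ofNat_le.mpr ha₁le
        push_cast at this ⊢
        omega
      have h0 : (0 : ℤ) ≤ (a₁.natAbs : ℤ) := Int.natCast_nonneg _
      nlinarith
    have hb₁sq : b₁ ^ 2 ≤ ((m : ℤ) / 2) ^ 2 := by
      rw [← Int.natAbs_sq b₁]
      have h1 : (b₁.natAbs : ℤ) ≤ (m : ℤ) / 2 := by
        have := Int.ofNat_le.mpr hb₁le
        push_cast at this ⊢
        omega
      have h0 : (0 : ℤ) ≤ (b₁.natAbs : ℤ) := Int.natCast_nonneg _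
      nlinarith
    obtain ⟨s, hs⟩ := ha
    obtain ⟨t, ht⟩ := hb
    have ha' : a = a₁ + m * s := by linarith
    have hb' : b = b₁ + m * t := by linarith
    have hN : (m : ℤ) ∣ a₁ ^ 2 + 2 * b₁ ^ 2 := by
      have heq : a₁ ^ 2 + 2 * b₁ ^ 2 =
          (m : ℤ) * p - m * (2 * a₁ * s + m * s ^ 2 + 4 * b₁ * t + 2 * m * t ^ 2) := by
        rw [hab, ha', hb']; ring
      rw [heq]
      exact Dvd.dvd.sub (Dvd.intro _ rfl) (Dvd.intro _ rfl)
    obtain ⟨r, hr⟩ := hN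
    have hmz : (0 : ℤ) < m := by exact_mod_cast hm
    have hq : 2 * ((m : ℤ) / 2) ≤ m := by omega
    have hq0 : 0 ≤ (m : ℤ) / 2 := by omega
    have hbound : a₁ ^ 2 + 2 * b₁ ^ 2 < (m : ℤ) * m := by
      rcases eq_or_lt_of_le hq0 with hq' | hq'
      · nlinarith
      · nlinarith
    have hrlt : r < m := by nlinarith
    have hrpos : 0 < r := by
      rcases lt_or_ge 0 r with h | h
      · exact h
      · exfalso
        have hle : (m : ℤ) * r ≤ 0 := mul_nonpos_iff.mpr (Or.inl ⟨le_of_lt hmz, h⟩)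
        have hge : (0 : ℤ) ≤ a₁ ^ 2 + 2 * b₁ ^ 2 := by positivity
        have hz : a₁ ^ 2 + 2 * b₁ ^ 2 = 0 := le_antisymm (hr ▸ hle) hge
        have ha₁0 : a₁ = 0 := by
          have h1 : a₁ ^ 2 = 0 := by nlinarith [sq_nonneg a₁, sq_nonneg b₁]
          exact sq_eq_zero_iff.mp h1
        have hb₁0 : b₁ = 0 := by
          have h1 : b₁ ^ 2 = 0 := by nlinarith [sq_nonneg a₁, sq_nonneg b₁]
          exact sq_eq_zero_iff.mp h1
        have hdvd : (m : ℤ) * m ∣ (m : ℤ) * p := by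
          rw [hab, ha', hb', ha₁0, hb₁0]
          exact ⟨s ^ 2 + 2 * t ^ 2, by ring⟩
        have hdp : (m : ℤ) ∣ p := (mul_dvd_mul_iff_left (by positivity : (m : ℤ) ≠ 0)).mp hdvd
        have hmp' : m ∣ p := by exact_mod_cast hdp
        rcases (Nat.Prime.eq_one_or_self_of_dvd hp m hmp') with h | h <;> omega
    have hu : (m : ℤ) ∣ a * a₁ + 2 * (b * b₁) := by
      have heq : a * a₁ + 2 * (b * b₁) =
          (a₁ ^ 2 + 2 * b₁ ^ 2) + m * (a₁ * s + 2 * (b₁ * t)) := by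
        rw [ha', hb']; ring
      rw [heq, hr]
      exact Dvd.dvd.add (Dvd.intro _ rfl) (Dvd.intro _ rfl)
    have hv : (m : ℤ) ∣ a * b₁ - a₁ * b := by
      have heq : a * b₁ - a₁ * b = m * (s * b₁ - a₁ * t) := by rw [ha', hb']; ring
      exact ⟨_, heq⟩
    obtain ⟨u, hu'⟩ := hu
    obtain ⟨v, hv'⟩ := hv
    have key : (r : ℤ) * p = u ^ 2 + 2 * v ^ 2 := by
      have hid : ((a : ℤ) ^ 2 + 2 * b ^ 2) * (a₁ ^ 2 + 2 * b₁ ^ 2) =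
          (a * a₁ + 2 * (b * b₁)) ^ 2 + 2 * (a * b₁ - a₁ * b) ^ 2 := by ring
      rw [← hab, hr, hu', hv'] at hid
      have h2 : (m : ℤ) ^ 2 * (r * p) = (m : ℤ) ^ 2 * (u ^ 2 + 2 * v ^ 2) := by
        nlinarith [hid]
      exact mul_left_cancel₀ (by positivity) h2
    obtain ⟨rn, hrn⟩ : ∃ rn : ℕ, (rn : ℤ) = r := ⟨r.toNat, Int.toNat_of_nonneg (le_of_lt hrpos)⟩
    refine ih rn ?_ ?_ ?_ ⟨u, v, by rw [hrn]; exact key⟩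
    · exact_mod_cast hrn ▸ hrlt
    · exact_mod_cast hrn.symm ▸ hrpos
    · have : rn < m := by exact_mod_cast hrn ▸ hrlt
      omega

private lemma exists_rep (p : ℕ) (hp : p.Prime) (h8 : p % 8 = 1) :
    ∃ a b : ℤ, (p : ℤ) = a ^ 2 + 2 * b ^ 2 := by
  haveI : Fact p.Prime := ⟨hp⟩
  have hp2 : p ≠ 2 := by omega
  have hsq : IsSquare (-2 : ZMod p) := (ZMod.exists_sq_eq_neg_two_iff hp2).mpr (Or.inl h8)
  obtain ⟨x, hx⟩ := hsq
  haveI : NeZero p := ⟨hp.ne_zero⟩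
  set y : ℤ := x.valMinAbs with hy
  have hdvd : (p : ℤ) ∣ y ^ 2 + 2 := by
    rw [← ZMod.intCast_zmod_eq_zero_iff_dvd]
    push_cast
    rw [ZMod.coe_valMinAbs, pow_two, ← hx]
    ring
  obtain ⟨k, hk⟩ := hdvd
  have hyle : y.natAbs ≤ p / 2 := ZMod.natAbs_valMinAbs_le _
  have hppos : (0 : ℤ) < p := by exact_mod_cast hp.pos
  have hysq : y ^ 2 ≤ ((p : ℤ) / 2) ^ 2 := by
    rw [← Int.natAbs_sq y]
    have h1 : (y.natAbs : ℤ) ≤ (p : ℤ) / 2 := by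
      have := Int.ofNat_le.mpr hyle
      push_cast at this ⊢
      omega
    have h0 : (0 : ℤ) ≤ (y.natAbs : ℤ) := Int.natCast_nonneg _
    nlinarith
  have hkpos : 0 < k := by nlinarith
  have hklt : k < p := by
    have h4 : 2 * ((p : ℤ) / 2) ≤ p := by omega
    have h5 : 0 ≤ (p : ℤ) / 2 := by omega
    have hpge : (9 : ℤ) ≤ p := by
      have h2 := hp.two_le
      have : 9 ≤ p := by omega
      exact_mod_cast this
    nlinarith
  obtain ⟨kn, hkn⟩ : ∃ kn : ℕ, (kn : ℤ) = k := ⟨k.toNat, Int.toNat_of_nonneg (le_of_lt hkpos)⟩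
  refine descent_step p hp kn ?_ ?_ ⟨y, 1, ?_⟩
  · exact_mod_cast hkn.symm ▸ hkpos
  · exact_mod_cast hkn ▸ hklt
  · rw [hkn]; linarith [hk]

/-- Let `p` be a prime with `p ≡ 1 (mod 8)`. Then there exists a pair of integers `(a, b)`
with `p = a² + 2b²` and `a ≡ 1 (mod 4)`, and this pair is unique up to the sign of `b`. -/
theorem stmt_1 (p : ℕ) (hp : p.Prime) (h8 : p % 8 = 1) :
    (∃ a b : ℤ, (p : ℤ) = a ^ 2 + 2 * b ^ 2 ∧ a % 4 = 1) ∧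
    (∀ a b a' b' : ℤ, (p : ℤ) = a ^ 2 + 2 * b ^ 2 → a % 4 = 1 →
      (p : ℤ) = a' ^ 2 + 2 * b' ^ 2 → a' % 4 = 1 → a = a' ∧ (b = b' ∨ b = -b')) := by
  have hpz : (0 : ℤ) < p := by exact_mod_cast hp.pos
  constructor
  · obtain ⟨a, b, hab⟩ := exists_rep p hp h8
    have hpodd : (p : ℤ) % 2 = 1 := by
      have h2 : p % 2 = 1 := by omega
      omega
    have haodd : a % 2 = 1 := by
      have h1 : (a ^ 2 + 2 * b ^ 2) % 2 = 1 := by rw [← hab]; exact hpodd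
      rcases Int.even_or_odd a with ⟨c, hc⟩ | ⟨c, hc⟩
      · exfalso
        have : a ^ 2 = 4 * c ^ 2 := by rw [hc]; ring
        omega
      · have : a ^ 2 = 4 * (c ^ 2 + c) + 1 := by rw [hc]; ring
        omega
    rcases Int.even_or_odd a with ⟨c, hc⟩ | ⟨c, hc⟩
    · exfalso; omega
    rcases Int.even_or_odd c with ⟨d, hd⟩ | ⟨d, hd⟩
    · exact ⟨a, b, hab, by omega⟩
    · exact ⟨-a, b, by rw [hab]; ring, by omega⟩
  · intro a b a' b' hab ha4 hab' ha4'
    have hpprime : Prime ((p : ℤ)) := Nat.prime_iff_prime_int.mp hp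
    have hkey : a * b' = a' * b ∨ a * b' = -(a' * b) := by
      have hdvd : (p : ℤ) ∣ (a * b' - a' * b) * (a * b' + a' * b) := by
        refine ⟨b' ^ 2 - b ^ 2, ?_⟩
        nlinarith [hab, hab']
      rcases hpprime.dvd_mul.mp hdvd with h | h
      · left
        by_contra hne
        have hne' : a * b' - a' * b ≠ 0 := fun hc => hne (by linarith)
        have hge : (p : ℤ) ≤ |a * b' - a' * b| := Int.le_of_dvd (abs_pos.mpr hne') ((dvd_abs _ _).mpr h)
        have hsq : (p : ℤ) ^ 2 ≤ (a * b' - a' * b) ^ 2 := by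
          have h2 := pow_le_pow_left₀ (le_of_lt hpz) hge 2
          rwa [sq_abs] at h2
        nlinarith [sq_nonneg (a * a' + 2 * (b * b')), hab, hab']
      · right
        by_contra hne
        have hne' : a * b' + a' * b ≠ 0 := fun hc => hne (by linarith)
        have hge : (p : ℤ) ≤ |a * b' + a' * b| := Int.le_of_dvd (abs_pos.mpr hne') ((dvd_abs _ _).mpr h)
        have hsq : (p : ℤ) ^ 2 ≤ (a * b' + a' * b) ^ 2 := by
          have h2 := pow_le_pow_left₀ (le_of_lt hpz) hge 2
          rwa [sq_abs] at h2
        nlinarith [sq_nonneg (a * a' - 2 * (b * b')), hab, hab']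
    have hsqeq : a ^ 2 * b' ^ 2 = a' ^ 2 * b ^ 2 := by
      rcases hkey with h | h
      · calc a ^ 2 * b' ^ 2 = (a * b') ^ 2 := by ring
          _ = (a' * b) ^ 2 := by rw [h]
          _ = a' ^ 2 * b ^ 2 := by ring
      · calc a ^ 2 * b' ^ 2 = (a * b') ^ 2 := by ring
          _ = (-(a' * b)) ^ 2 := by rw [h]
          _ = a' ^ 2 * b ^ 2 := by ring
    have hbb : b ^ 2 = b' ^ 2 := by
      have h0 : (p : ℤ) * (b' ^ 2 - b ^ 2) = 0 := by nlinarith [hab, hab']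
      rcases mul_eq_zero.mp h0 with h | h
      · omega
      · linarith
    have haa : a ^ 2 = a' ^ 2 := by nlinarith [hab, hab']
    have haeq : a = a' := by
      have h0 : (a - a') * (a + a') = 0 := by nlinarith
      rcases mul_eq_zero.mp h0 with h | h
      · linarith
      · omega
    refine ⟨haeq, ?_⟩
    have h0 : (b - b') * (b + b') = 0 := by nlinarith
    rcases mul_eq_zero.mp h0 with h | h
    · left; linarith
    · right; linarith
end

section
/- Let n ≥ 1 be an even integer, let u = n², and suppose p = 4u² + 12u + 1 is prime. Then p = (1 − 2u)² + 4(2n)², and 1 − 2u ≡ 1 (mod 4); moreover, for every pair of integers (x, y) with p = x² + 4y² and x ≡ 1 (mod 4), one has x = 1 − 2u and y = 2n or y = −2n. -/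
lemma gi_prime_of_norm_prime {z : GaussianInt} (h : Prime (Zsqrtd.norm z)) : Prime z := by
  rw [← UniqueFactorizationMonoid.irreducible_iff_prime]
  refine ⟨fun hz => h.not_unit ((Zsqrtd.isUnit_iff_norm_isUnit z).mp hz), ?_⟩
  intro a b hab
  have := h.irreducible.isUnit_or_isUnit (by rw [hab, Zsqrtd.norm_mul])
  rcases this with h1 | h1
  · exact Or.inl ((Zsqrtd.isUnit_iff_norm_isUnit a).mpr h1)
  · exact Or.inr ((Zsqrtd.isUnit_iff_norm_isUnit b).mpr h1)

lemma two_sq_rot (p : ℕ) (hp : p.Prime) (a b c d : ℤ)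
    (h1 : (p : ℤ) = a ^ 2 + b ^ 2) (h2 : (p : ℤ) = c ^ 2 + d ^ 2) :
    ∃ t1 t2 : ℤ, t1 ^ 2 + t2 ^ 2 = 1 ∧ c = a * t1 - b * t2 ∧
      (d = a * t2 + b * t1 ∨ -d = a * t2 + b * t1) := by
  set z : GaussianInt := ⟨a, b⟩ with hz
  set w : GaussianInt := ⟨c, d⟩ with hw
  have hnz : Zsqrtd.norm z = (p : ℤ) := by
    simp only [Zsqrtd.norm_def, hz]; ring_nf; linear_combination -h1
  have hnw : Zsqrtd.norm w = (p : ℤ) := by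
    simp only [Zsqrtd.norm_def, hw]; ring_nf; linear_combination -h2
  have hzp : Prime z := gi_prime_of_norm_prime (by rw [hnz]; exact Nat.prime_iff_prime_int.mp hp)
  have hdvd : z ∣ w * star w := by
    rw [← Zsqrtd.norm_eq_mul_conj, hnw, ← hnz, Zsqrtd.norm_eq_mul_conj]
    exact ⟨star z, rfl⟩
  have hp0 : (p : ℤ) ≠ 0 := by exact_mod_cast hp.ne_zero
  rcases hzp.2.2 w (star w) hdvd with hd | hd
  · obtain ⟨t, ht⟩ := hd
    have hnt : Zsqrtd.norm t = 1 := by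
      have h3 := congrArg Zsqrtd.norm ht
      rw [Zsqrtd.norm_mul, hnz, hnw] at h3
      have := mul_left_cancel₀ hp0 (by linarith [h3] : (p : ℤ) * 1 = (p : ℤ) * Zsqrtd.norm t)
      linarith [this]
    refine ⟨t.re, t.im, ?_, ?_, Or.inl ?_⟩
    · have h4 := Zsqrtd.norm_def t; rw [hnt] at h4; ring_nf; linarith [h4]
    · have h4 := congrArg Zsqrtd.re ht
      simp [Zsqrtd.re_mul, hz, hw] at h4; linarith [h4]
    · have h4 := congrArg Zsqrtd.im ht
      simp [Zsqrtd.im_mul, hz, hw] at h4; linarith [h4]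
  · obtain ⟨t, ht⟩ := hd
    have hnt : Zsqrtd.norm t = 1 := by
      have h3 := congrArg Zsqrtd.norm ht
      rw [Zsqrtd.norm_conj, Zsqrtd.norm_mul, hnz] at h3
      rw [hnw] at h3
      have := mul_left_cancel₀ hp0 (by linarith [h3] : (p : ℤ) * 1 = (p : ℤ) * Zsqrtd.norm t)
      linarith [this]
    refine ⟨t.re, t.im, ?_, ?_, Or.inr ?_⟩
    · have h4 := Zsqrtd.norm_def t; rw [hnt] at h4; ring_nf; linarith [h4]
    · have h4 := congrArg Zsqrtd.re ht
      simp [Zsqrtd.re_mul, hz, hw, Zsqrtd.re_star] at h4; linarith [h4]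
    · have h4 := congrArg Zsqrtd.im ht
      simp [Zsqrtd.im_mul, hz, hw, Zsqrtd.im_star] at h4; linarith [h4]

/-- For even `n ≥ 1`, `u = n²`, and prime `p = 4u² + 12u + 1`, the unique representation
`p = x² + 4y²` with `x ≡ 1 (mod 4)` is given by `x = 1 - 2u`, `y = ±2n`. -/
theorem stmt_2 (n : ℤ) (hn : 1 ≤ n) (hne : Even n) (u : ℤ) (hu : u = n ^ 2)
    (p : ℕ) (hp : p.Prime) (hpu : (p : ℤ) = 4 * u ^ 2 + 12 * u + 1) :
    (p : ℤ) = (1 - 2 * u) ^ 2 + 4 * (2 * n) ^ 2 ∧ (1 - 2 * u) % 4 = 1 ∧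
    (∀ x y : ℤ, (p : ℤ) = x ^ 2 + 4 * y ^ 2 → x % 4 = 1 →
      x = 1 - 2 * u ∧ (y = 2 * n ∨ y = -(2 * n))) := by
  obtain ⟨k, hk⟩ := hne
  have hrep : (p : ℤ) = (1 - 2 * u) ^ 2 + 4 * (2 * n) ^ 2 := by
    rw [hpu, hu]; ring
  have hmod : (1 - 2 * u) % 4 = 1 := by
    have : u = 4 * k ^ 2 := by rw [hu, hk]; ring
    omega
  refine ⟨hrep, hmod, fun x y hxy hx4 => ?_⟩
  obtain ⟨t1, t2, ht, hc, hd⟩ := two_sq_rot p hp x (2 * y) (1 - 2 * u) (4 * n)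
    (by linear_combination hxy) (by linear_combination hrep)
  have ht1 : -1 ≤ t1 ∧ t1 ≤ 1 := by
    constructor <;> nlinarith [sq_nonneg t2, sq_nonneg (t1 + 1), sq_nonneg (t1 - 1)]
  obtain ⟨ht1a, ht1b⟩ := ht1
  interval_cases t1
  · exfalso
    have ht2 : t2 = 0 := by nlinarith [sq_nonneg t2]
    subst ht2
    have : 1 - 2 * u = -x := by linarith [hc]
    omega
  · exfalso
    have ht2 : t2 = 1 ∨ t2 = -1 := by
      have h0 : (t2 - 1) * (t2 + 1) = 0 := by nlinarith
      rcases mul_eq_zero.mp h0 with h | h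
      · left; linarith
      · right; linarith
    rcases ht2 with h | h <;> subst h <;> omega
  · have ht2 : t2 = 0 := by nlinarith [sq_nonneg t2]
    subst ht2
    have hxc : x = 1 - 2 * u := by linarith [hc]
    refine ⟨hxc, ?_⟩
    rcases hd with h | h
    · left; linarith
    · right; linarith
end

section
/- Let n ≥ 1 be an even integer, let u = n², and suppose p = 4u² + 12u + 1 is prime. Then p = (2u + 1)² + 2(2n)², and 2u + 1 ≡ 1 (mod 4); moreover, for every pair of integers (a, b) with p = a² + 2b² and a ≡ 1 (mod 4), one has a = 2u + 1 and b = 2n or b = −2n. -/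
theorem key_unique (p : ℕ) (hp : p.Prime) (a b c d : ℤ)
    (h1 : (p : ℤ) = a ^ 2 + 2 * b ^ 2) (h2 : (p : ℤ) = c ^ 2 + 2 * d ^ 2)
    (ha : a % 4 = 1) (hc : c % 4 = 1) : a = c ∧ (b = d ∨ b = -d) := by
  have hp2 : 2 ≤ (p : ℤ) := by exact_mod_cast hp.two_le
  have hp0 : (p : ℤ) ≠ 0 := by omega
  have hpZ : Prime (p : ℤ) := Nat.prime_iff_prime_int.mp hp
  have hdvd : (p : ℤ) ∣ (a * d - b * c) * (a * d + b * c) :=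
    ⟨d ^ 2 - b ^ 2, by linear_combination b ^ 2 * h2 - d ^ 2 * h1⟩
  have hadbc : (a * d) ^ 2 = (b * c) ^ 2 := by
    rcases hpZ.dvd_mul.mp hdvd with ⟨e, he⟩ | ⟨e, he⟩
    · have hsq : (p : ℤ) ^ 2 = (a * c + 2 * b * d) ^ 2 + 2 * ((p : ℤ) * e) ^ 2 := by
        rw [← he]; linear_combination (p : ℤ) * h1 + (a ^ 2 + 2 * b ^ 2) * h2
      have he0 : e = 0 := by
        by_contra hne0
        have h1e : 1 ≤ e ^ 2 := by
          rcases lt_or_gt_of_ne hne0 with h' | h' <;> nlinarith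
        nlinarith [sq_nonneg (a * c + 2 * b * d),
          mul_le_mul_of_nonneg_left h1e (show (0:ℤ) ≤ 2 * (p : ℤ) ^ 2 by positivity)]
      rw [he0, mul_zero] at he
      have had : a * d = b * c := by linarith
      rw [had]
    · have hsq : (p : ℤ) ^ 2 = (a * c - 2 * b * d) ^ 2 + 2 * ((p : ℤ) * e) ^ 2 := by
        rw [← he]; linear_combination (p : ℤ) * h1 + (a ^ 2 + 2 * b ^ 2) * h2
      have he0 : e = 0 := by
        by_contra hne0
        have h1e : 1 ≤ e ^ 2 := by
          rcases lt_or_gt_of_ne hne0 with h' | h' <;> nlinarith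
        nlinarith [sq_nonneg (a * c - 2 * b * d),
          mul_le_mul_of_nonneg_left h1e (show (0:ℤ) ≤ 2 * (p : ℤ) ^ 2 by positivity)]
      rw [he0, mul_zero] at he
      have had : a * d = -(b * c) := by linarith
      rw [had]; ring
  have hb2 : b ^ 2 = d ^ 2 := by
    have h : b ^ 2 * (p : ℤ) = d ^ 2 * (p : ℤ) := by
      linear_combination b ^ 2 * h2 - d ^ 2 * h1 - hadbc
    exact mul_right_cancel₀ hp0 h
  have ha2 : a ^ 2 = c ^ 2 := by
    have h : a ^ 2 * (p : ℤ) = c ^ 2 * (p : ℤ) := by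
      linear_combination a ^ 2 * h2 - c ^ 2 * h1 + 2 * hadbc
    exact mul_right_cancel₀ hp0 h
  constructor
  · rcases mul_eq_zero.mp (show (a - c) * (a + c) = 0 from by linear_combination ha2) with h | h
    · linarith
    · omega
  · rcases mul_eq_zero.mp (show (b - d) * (b + d) = 0 from by linear_combination hb2) with h | h
    · left; linarith
    · right; linarith

/-- For even `n ≥ 1`, `u = n²`, and prime `p = 4u² + 12u + 1`, the unique representation
`p = a² + 2b²` with `a ≡ 1 (mod 4)` is given by `a = 2u + 1`, `b = ±2n`. -/
theorem stmt_3 (n : ℤ) (hn : 1 ≤ n) (hne : Even n) (u : ℤ) (hu : u = n ^ 2)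
    (p : ℕ) (hp : p.Prime) (hpu : (p : ℤ) = 4 * u ^ 2 + 12 * u + 1) :
    (p : ℤ) = (2 * u + 1) ^ 2 + 2 * (2 * n) ^ 2 ∧ (2 * u + 1) % 4 = 1 ∧
    (∀ a b : ℤ, (p : ℤ) = a ^ 2 + 2 * b ^ 2 → a % 4 = 1 →
      a = 2 * u + 1 ∧ (b = 2 * n ∨ b = -(2 * n))) := by
  obtain ⟨m, hm⟩ := hne
  have hu4 : u = 4 * m ^ 2 := by rw [hu, hm]; ring
  have h1 : (p : ℤ) = (2 * u + 1) ^ 2 + 2 * (2 * n) ^ 2 := by rw [hpu, hu]; ring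
  have h4 : (2 * u + 1) % 4 = 1 := by omega
  refine ⟨h1, h4, fun a b hab ha => ?_⟩
  exact key_unique p hp a b (2 * u + 1) (2 * n) hab h1 ha h4
end

section
/- Let n ≥ 1 be an odd integer, let u = n², and suppose p = 4u² + 12u + 1 is prime. Then p = (2u − 1)² + 4(2n)², and 2u − 1 ≡ 1 (mod 4); moreover, for every pair of integers (x, y) with p = x² + 4y² and x ≡ 1 (mod 4), one has x = 2u − 1 and y = 2n or y = −2n. -/
lemma sq_cancel {p : ℕ} (hp : p.Prime) {a b c d : ℤ}
    (h1 : (p:ℤ) = a^2 + b^2) (h2 : (p:ℤ) = c^2 + d^2)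
    (h : a^2 * d^2 = b^2 * c^2) : a^2 = c^2 ∧ b^2 = d^2 := by
  have hp0 : (p:ℤ) ≠ 0 := by exact_mod_cast hp.ne_zero
  have hac : a^2 * (p:ℤ) = c^2 * (p:ℤ) := by
    calc a^2 * (p:ℤ) = a^2*c^2 + a^2*d^2 := by rw [h2]; ring
    _ = a^2*c^2 + b^2*c^2 := by rw [h]
    _ = c^2 * (p:ℤ) := by rw [h1]; ring
  have h3 : a^2 = c^2 := mul_right_cancel₀ hp0 hac
  exact ⟨h3, by linarith [h1, h2]⟩

lemma two_sq_unique {p : ℕ} (hp : p.Prime) {a b c d : ℤ}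
    (h1 : (p:ℤ) = a^2 + b^2) (h2 : (p:ℤ) = c^2 + d^2) :
    (a^2 = c^2 ∧ b^2 = d^2) ∨ (a^2 = d^2 ∧ b^2 = c^2) := by
  have hpz : Prime (p:ℤ) := Nat.prime_iff_prime_int.mp hp
  have hppos : (0:ℤ) < p := by exact_mod_cast hp.pos
  have key : (p:ℤ) ∣ (a*d - b*c) * (a*d + b*c) := by
    refine ⟨a^2 + d^2 - p, ?_⟩
    linear_combination ((p:ℤ) - d^2) * h1 + b^2 * h2
  rcases hpz.dvd_mul.mp key with hd | hd <;> obtain ⟨k, hk⟩ := hd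
  · have hid : (a*c + b*d)^2 = (p:ℤ)^2 * (1 - k^2) := by
      linear_combination (-(c^2+d^2)) * h1 - (p:ℤ) * h2 - (a*d - b*c + (p:ℤ)*k) * hk
    have hk2 : k^2 ≤ 1 := by nlinarith [sq_nonneg (a*c + b*d)]
    have hcase : k = 0 ∨ k^2 = 1 := by
      rcases lt_trichotomy k 0 with h|h|h
      · right; nlinarith
      · left; exact h
      · right; nlinarith
    rcases hcase with h0 | h1'
    · left
      apply sq_cancel hp h1 h2
      have hbc : a*d = b*c := by rw [h0] at hk; linarith
      linear_combination (a*d + b*c) * hbc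
    · right
      have hac : a*c + b*d = 0 := by
        have := hid
        rw [h1'] at this
        simpa using this
      have h' : a^2 * c^2 = b^2 * d^2 := by linear_combination (a*c - b*d) * hac
      exact sq_cancel hp h1 (by rw [h2]; ring) h'
  · have hid : (a*c - b*d)^2 = (p:ℤ)^2 * (1 - k^2) := by
      linear_combination (-(c^2+d^2)) * h1 - (p:ℤ) * h2 - (a*d + b*c + (p:ℤ)*k) * hk
    have hk2 : k^2 ≤ 1 := by nlinarith [sq_nonneg (a*c - b*d)]
    have hcase : k = 0 ∨ k^2 = 1 := by
      rcases lt_trichotomy k 0 with h|h|h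
      · right; nlinarith
      · left; exact h
      · right; nlinarith
    rcases hcase with h0 | h1'
    · left
      apply sq_cancel hp h1 h2
      have hbc : a*d = -(b*c) := by rw [h0] at hk; linarith
      linear_combination (a*d - b*c) * hbc
    · right
      have hac : a*c - b*d = 0 := by
        have := hid
        rw [h1'] at this
        simpa using this
      have h' : a^2 * c^2 = b^2 * d^2 := by linear_combination (a*c + b*d) * hac
      exact sq_cancel hp h1 (by rw [h2]; ring) h'

/-- For odd `n ≥ 1`, `u = n²`, and prime `p = 4u² + 12u + 1`, the unique representation
`p = x² + 4y²` with `x ≡ 1 (mod 4)` is given by `x = 2u - 1`, `y = ±2n`. -/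
theorem stmt_4 (n : ℤ) (hn : 1 ≤ n) (hno : Odd n) (u : ℤ) (hu : u = n ^ 2)
    (p : ℕ) (hp : p.Prime) (hpu : (p : ℤ) = 4 * u ^ 2 + 12 * u + 1) :
    (p : ℤ) = (2 * u - 1) ^ 2 + 4 * (2 * n) ^ 2 ∧ (2 * u - 1) % 4 = 1 ∧
    (∀ x y : ℤ, (p : ℤ) = x ^ 2 + 4 * y ^ 2 → x % 4 = 1 →
      x = 2 * u - 1 ∧ (y = 2 * n ∨ y = -(2 * n))) := by
  obtain ⟨k, hk⟩ := hno
  have huk : u = 4*k^2 + 4*k + 1 := by rw [hu, hk]; ring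
  have hrep : (p : ℤ) = (2 * u - 1) ^ 2 + 4 * (2 * n) ^ 2 := by
    rw [hpu, hu]; ring
  refine ⟨hrep, by omega, ?_⟩
  intro x y hxy hx4
  have h1 : (p:ℤ) = x^2 + (2*y)^2 := by linear_combination hxy
  have h2 : (p:ℤ) = (2*u-1)^2 + (4*n)^2 := by linear_combination hrep
  rcases two_sq_unique hp h1 h2 with ⟨hxs, hys⟩ | ⟨hxs, hys⟩
  · have h5 : (x - (2*u-1)) * (x + (2*u-1)) = 0 := by linear_combination hxs
    have h6 : (2*y - 4*n) * (2*y + 4*n) = 0 := by linear_combination hys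
    have hx : x = 2*u - 1 := by
      rcases mul_eq_zero.mp h5 with h | h
      · linarith
      · exfalso
        have hxv : x = -(2*u-1) := by linarith
        obtain ⟨A, hA⟩ : ∃ A, u = 4*A + 1 := ⟨k^2 + k, by linarith⟩
        omega
    refine ⟨hx, ?_⟩
    rcases mul_eq_zero.mp h6 with h | h
    · left; linarith
    · right; linarith
  · exfalso
    obtain ⟨q, hq⟩ : ∃ q, x = 4*q + 1 := ⟨x / 4, by omega⟩
    have : 16*q^2 + 8*q + 1 = 16 * n^2 := by linear_combination hxs - (x + 4*q + 1)*hq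
    have hA : ∃ A B : ℤ, 16*A + 8*q + 1 = 16*B := ⟨q^2, n^2, this⟩
    obtain ⟨A, B, hAB⟩ := hA
    omega
end

section
/- Let n ≥ 1 be an odd integer, let u = n², and suppose p = 4u² + 12u + 1 is prime. Then p = (−2u − 1)² + 2(2n)², and −2u − 1 ≡ 1 (mod 4); moreover, for every pair of integers (a, b) with p = a² + 2b² and a ≡ 1 (mod 4), one has a = −2u − 1 and b = 2n or b = −2n. -/
/-- For odd `n ≥ 1`, `u = n²`, and prime `p = 4u² + 12u + 1`, the unique representation
`p = a² + 2b²` with `a ≡ 1 (mod 4)` is given by `a = -2u - 1`, `b = ±2n`. -/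
theorem stmt_5 (n : ℤ) (hn : 1 ≤ n) (hno : Odd n) (u : ℤ) (hu : u = n ^ 2)
    (p : ℕ) (hp : p.Prime) (hpu : (p : ℤ) = 4 * u ^ 2 + 12 * u + 1) :
    (p : ℤ) = (-2 * u - 1) ^ 2 + 2 * (2 * n) ^ 2 ∧ (-2 * u - 1) % 4 = 1 ∧
    (∀ a b : ℤ, (p : ℤ) = a ^ 2 + 2 * b ^ 2 → a % 4 = 1 →
      a = -2 * u - 1 ∧ (b = 2 * n ∨ b = -(2 * n))) := by
  obtain ⟨m, hm⟩ := hno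
  have hu4 : u % 4 = 1 := by
    obtain ⟨t, ht⟩ : ∃ t, u = 4 * t + 1 := ⟨m ^ 2 + m, by rw [hu, hm]; ring⟩
    omega
  have hc : (p : ℤ) = (-2 * u - 1) ^ 2 + 2 * (2 * n) ^ 2 := by rw [hpu, hu]; ring
  refine ⟨hc, by omega, ?_⟩
  intro a b hab ha4
  set c : ℤ := -2 * u - 1 with hcdef
  set d : ℤ := 2 * n with hddef
  have hc4 : c % 4 = 1 := by omega
  have hppos : (0 : ℤ) < p := by exact_mod_cast hp.pos
  have hpz : Prime (p : ℤ) := Nat.prime_iff_prime_int.mp hp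
  have hdvd : (p : ℤ) ∣ (a * d - b * c) * (a * d + b * c) :=
    ⟨d ^ 2 - b ^ 2, by linear_combination b ^ 2 * hc - d ^ 2 * hab⟩
  have hsq : (a * d) ^ 2 = (b * c) ^ 2 := by
    rcases hpz.dvd_mul.mp hdvd with h | h
    · obtain ⟨k, hk⟩ := h
      have key : (a * c + 2 * b * d) ^ 2 + 2 * (a * d - b * c) ^ 2 = (p : ℤ) * (p : ℤ) := by
        linear_combination (-(c ^ 2) - 2 * d ^ 2) * hab - (p : ℤ) * hc
      rw [hk] at key
      have hk2 : 2 * k ^ 2 ≤ 1 := by nlinarith [sq_nonneg (a * c + 2 * b * d), hppos]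
      have hk0 : k = 0 := by
        by_contra hne
        have h1 : 0 < k ^ 2 := by positivity
        have h2 : 1 ≤ k ^ 2 := h1
        linarith
      have : a * d - b * c = 0 := by rw [hk, hk0]; ring
      have : a * d = b * c := by linarith
      rw [this]
    · obtain ⟨k, hk⟩ := h
      have key : (a * c - 2 * b * d) ^ 2 + 2 * (a * d + b * c) ^ 2 = (p : ℤ) * (p : ℤ) := by
        linear_combination (-(c ^ 2) - 2 * d ^ 2) * hab - (p : ℤ) * hc
      rw [hk] at key
      have hk2 : 2 * k ^ 2 ≤ 1 := by nlinarith [sq_nonneg (a * c - 2 * b * d), hppos]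
      have hk0 : k = 0 := by
        by_contra hne
        have h1 : 0 < k ^ 2 := by positivity
        have h2 : 1 ≤ k ^ 2 := h1
        linarith
      have h0 : a * d + b * c = 0 := by rw [hk, hk0]; ring
      have : a * d = -(b * c) := by linarith
      rw [this]; ring
  have h0 : (p : ℤ) * (d ^ 2 - b ^ 2) = 0 := by
    linear_combination d ^ 2 * hab - b ^ 2 * hc + hsq
  have hdb : d ^ 2 = b ^ 2 := by
    rcases mul_eq_zero.mp h0 with h | h
    · exact absurd h hppos.ne'
    · linarith
  have hac : a ^ 2 = c ^ 2 := by linear_combination -hab + hc + 2 * hdb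
  have hacz : (a - c) * (a + c) = 0 := by linear_combination hac
  have haeq : a = c := by
    rcases mul_eq_zero.mp hacz with h | h
    · linarith
    · omega
  have hbdz : (b - d) * (b + d) = 0 := by linear_combination -hdb
  refine ⟨haeq, ?_⟩
  rcases mul_eq_zero.mp hbdz with h | h
  · left; linarith
  · right; linarith
end

section
/- Let n ≥ 1 be an even integer, let u = n², and suppose p = 4u² + 12u + 1 is prime. Then 2 is a fourth power in ℤ/pℤ, i.e., there exists x ∈ ℤ/pℤ with x⁴ = 2. -/
/-- For even `n ≥ 1`, `u = n²`, and prime `p = 4u² + 12u + 1`, the element `2` is a fourth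
power in `ℤ/pℤ`. -/
theorem stmt_6 (n : ℕ) (hn : 1 ≤ n) (hne : Even n) (u : ℕ) (hu : u = n ^ 2)
    (p : ℕ) (hp : p = 4 * u ^ 2 + 12 * u + 1) (hprime : p.Prime) :
    ∃ x : ZMod p, x ^ 4 = 2 := by
  haveI : Fact p.Prime := ⟨hprime⟩
  obtain ⟨k, hk⟩ := hne
  have hk1 : 1 ≤ k := by omega
  obtain ⟨q, hq⟩ : ∃ q : ℕ, q = 2 * u + 3 := ⟨_, rfl⟩
  have hpk : p = 8 * (8 * k ^ 4 + 6 * k ^ 2) + 1 := by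
    subst hp hu hk; ring
  have hqk : q = 8 * k ^ 2 + 3 := by
    subst hu hk; rw [hq]; ring
  have hp8 : p % 8 = 1 := by omega
  have hp4 : p % 4 = 1 := by omega
  have hq8 : q % 8 = 3 := by omega
  have hqodd : Odd q := by rw [Nat.odd_iff]; omega
  have hk24 : k ^ 2 ≤ k ^ 4 := Nat.pow_le_pow_right hk1 (by norm_num)
  have hk2 : 1 ≤ k ^ 2 := Nat.one_le_pow _ _ hk1
  have hqlt : q < p := by omega
  have hnat : p + 8 = q * q := by subst hp; rw [hq]; ring
  -- J(q | p) = 1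
  have hJ : jacobiSym (q : ℤ) p = 1 := by
    have h1 : jacobiSym (q : ℤ) p = jacobiSym (p : ℤ) q :=
      jacobiSym.quadratic_reciprocity_one_mod_four' hqodd hp4
    have hpq : (p : ℤ) = -8 + (q : ℤ) * q := by
      have := hnat; zify at this; linarith
    have h2 : jacobiSym (p : ℤ) q = jacobiSym (-8 : ℤ) q := by
      apply jacobiSym.mod_left'
      rw [hpq, Int.add_mul_emod_self_left]
    have h3 : jacobiSym (-8 : ℤ) q = jacobiSym (-2 : ℤ) q * jacobiSym ((2 : ℤ) ^ 2) q := by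
      rw [← jacobiSym.mul_left]; norm_num
    have h4 : jacobiSym ((2 : ℤ) ^ 2) q = 1 := by
      apply jacobiSym.sq_one'
      have : Nat.Coprime 2 q := Nat.coprime_two_left.mpr hqodd
      simpa [Int.gcd] using this
    have h5 : jacobiSym (-2 : ℤ) q = 1 := by
      rw [jacobiSym.at_neg_two hqodd, ZMod.χ₈'_nat_eq_if_mod_eight]
      simp [hq8, Nat.odd_iff.mp hqodd]
    rw [h1, h2, h3, h4, h5]; ring
  -- q is a square in ZMod p
  have hqne : ((q : ℕ) : ZMod p) ≠ 0 := by
    rw [Ne, ZMod.natCast_eq_zero_iff]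
    intro hdvd
    have := Nat.le_of_dvd (by omega) hdvd
    omega
  have hqsq : IsSquare ((q : ℕ) : ZMod p) := by
    rw [← legendreSym.eq_one_iff' p hqne, jacobiSym.legendreSym.to_jacobiSym]
    exact hJ
  have h2sq : IsSquare (2 : ZMod p) := by
    rw [ZMod.exists_sq_eq_two_iff (by omega : p ≠ 2)]
    exact Or.inl hp8
  obtain ⟨s, hs⟩ := hqsq
  obtain ⟨t, ht⟩ := h2sq
  -- q² = 8 in ZMod p
  have hq2 : ((q : ℕ) : ZMod p) ^ 2 = 8 := by
    have h8 : ((p + 8 : ℕ) : ZMod p) = ((q * q : ℕ) : ZMod p) := by rw [hnat]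
    push_cast at h8
    rw [ZMod.natCast_self] at h8
    rw [sq]
    linear_combination -h8
  have h2ne : (2 : ZMod p) ≠ 0 := by
    intro hc
    have h2 : ((2 : ℕ) : ZMod p) = 0 := by push_cast; exact hc
    rw [ZMod.natCast_eq_zero_iff] at h2
    have := Nat.le_of_dvd (by omega) h2
    omega
  have ht0 : t ≠ 0 := by
    intro h
    rw [h, mul_zero] at ht
    exact h2ne ht
  refine ⟨s * t⁻¹, ?_⟩
  have hs4 : s ^ 4 = 8 := by
    have h1 : (s * s) ^ 2 = 8 := by rw [← hs]; exact hq2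
    calc s ^ 4 = (s * s) ^ 2 := by ring
    _ = 8 := h1
  have ht4 : t ^ 4 = 4 := by
    have h1 : (t * t) ^ 2 = 4 := by rw [← ht]; norm_num
    calc t ^ 4 = (t * t) ^ 2 := by ring
    _ = 4 := h1
  have ht4ne : (t : ZMod p) ^ 4 ≠ 0 := pow_ne_zero 4 ht0
  have : (s * t⁻¹) ^ 4 * t ^ 4 = 2 * t ^ 4 := by
    rw [mul_pow, inv_pow, inv_mul_cancel_right₀ ht4ne, hs4, ht4]
    norm_num
  exact mul_right_cancel₀ ht4ne this
end

section
/- Let n ≥ 1 be an odd integer, let u = n², and suppose p = 4u² + 12u + 1 is prime. Then 2 is a square in ℤ/pℤ but not a fourth power in ℤ/pℤ, i.e., there exists x ∈ ℤ/pℤ with x² = 2, but there is no x ∈ ℤ/pℤ with x⁴ = 2. -/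
/-- For odd `n ≥ 1`, `u = n²`, and prime `p = 4u² + 12u + 1`, the element `2` is a square
in `ℤ/pℤ` but not a fourth power in `ℤ/pℤ`. -/
theorem stmt_7 (n : ℕ) (hn : 1 ≤ n) (hno : Odd n) (u : ℕ) (hu : u = n ^ 2)
    (p : ℕ) (hp : p = 4 * u ^ 2 + 12 * u + 1) (hprime : p.Prime) :
    (∃ x : ZMod p, x ^ 2 = 2) ∧ ¬ (∃ x : ZMod p, x ^ 4 = 2) := by
  haveI : Fact p.Prime := ⟨hprime⟩
  obtain ⟨k, hk⟩ := hno
  obtain ⟨K, hK⟩ : ∃ K, K = k * k + k := ⟨_, rfl⟩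
  have hu' : u = 4 * K + 1 := by rw [hu, hk, hK]; ring
  have hp' : p = 64 * (K * K) + 80 * K + 17 := by rw [hp, hu']; ring
  have hp8 : p % 8 = 1 := by omega
  have hp4 : p % 4 = 1 := by omega
  have hpne2 : p ≠ 2 := by omega
  obtain ⟨m, hm⟩ : ∃ m, m = 2 * u + 3 := ⟨_, rfl⟩
  have hm8 : m % 8 = 5 := by omega
  have hmodd : Odd m := Nat.odd_iff.mpr (by omega)
  have hmm : m * m = p + 8 := by rw [hm, hp]; ring
  -- 2 is a square
  obtain ⟨s, hs⟩ : IsSquare (2 : ZMod p) :=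
    (ZMod.exists_sq_eq_two_iff hpne2).mpr (Or.inl hp8)
  -- Jacobi symbol computation: m is a non-residue mod p
  have hmmZ : ((m : ℤ)) * m = (p : ℤ) + 8 := by exact_mod_cast hmm
  have hJrec : jacobiSym (p : ℤ) m = jacobiSym (m : ℤ) p :=
    jacobiSym.quadratic_reciprocity_one_mod_four hp4 hmodd
  have hmodeq : (p : ℤ) % m = (-8) % m := by
    have h : (p : ℤ) = -8 + (m : ℤ) * m := by linarith
    rw [h, Int.add_mul_emod_self_left]
  have hJneg8 : jacobiSym (-8 : ℤ) m = -1 := by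
    have h8 : (-8 : ℤ) = -1 * 2 * 2 * 2 := by norm_num
    rw [h8, jacobiSym.mul_left, jacobiSym.mul_left, jacobiSym.mul_left,
      jacobiSym.at_neg_one hmodd, jacobiSym.at_two hmodd,
      ZMod.χ₄_nat_one_mod_four (by omega), ZMod.χ₈_nat_eq_if_mod_eight]
    rw [if_neg (by omega), if_neg (by omega)]
    norm_num
  have hJ : jacobiSym (m : ℤ) p = -1 := by
    rw [← hJrec, jacobiSym.mod_left, hmodeq, ← jacobiSym.mod_left, hJneg8]
  have hLeg : legendreSym p (m : ℤ) = -1 := by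
    rw [jacobiSym.legendreSym.to_jacobiSym]; exact hJ
  have hnotsq : ¬ IsSquare ((m : ℕ) : ZMod p) := by
    have h := (legendreSym.eq_neg_one_iff p (a := (m : ℤ))).mp hLeg
    simpa using h
  -- m² = 8 in ZMod p
  have h8 : ((m : ℕ) : ZMod p) ^ 2 = 8 := by
    have h : (((m * m : ℕ)) : ZMod p) = ((p + 8 : ℕ) : ZMod p) := by rw [hmm]
    push_cast at h
    rw [ZMod.natCast_self] at h
    rw [pow_two]
    rw [h]; ring
  constructor
  · exact ⟨s, by rw [sq, ← hs]⟩
  · rintro ⟨x, hx⟩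
    have hx2 : ((2 : ZMod p) * x ^ 2) ^ 2 = 8 := by
      have h : ((2 : ZMod p) * x ^ 2) ^ 2 = 4 * x ^ 4 := by ring
      rw [h, hx]; norm_num
    have heq : ((m : ℕ) : ZMod p) ^ 2 = ((2 : ZMod p) * x ^ 2) ^ 2 := by rw [h8, hx2]
    have hcases := sq_eq_sq_iff_eq_or_eq_neg.mp heq
    obtain ⟨t, ht⟩ : IsSquare (-1 : ZMod p) :=
      (ZMod.exists_sq_eq_neg_one_iff).mpr (by omega)
    apply hnotsq
    rcases hcases with h | h
    · exact ⟨s * x, by rw [h, hs]; ring⟩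
    · exact ⟨t * s * x, by rw [h, hs]; linear_combination (s * s * x ^ 2) * ht⟩
end

section
/- Let p be a prime with p ≡ 1 (mod 16), let α be a generator of the multiplicative group of ℤ/pℤ, let C_i (indices mod 8) be the order-8 cyclotomic cosets, and let (i,j) (indices mod 8) be the order-8 cyclotomic numbers. Let S = C_0 ∪ C_1 and T = C_4 ∪ C_5. Then for every ℓ with 0 ≤ ℓ ≤ 7 and every h ∈ C_ℓ, the number of pairs (s,t) with s ∈ S, t ∈ T, and s + t = h equals v_ℓ := (4,ℓ) + (5,ℓ) + (3,ℓ−1) + (4,ℓ−1) (indices taken mod 8); moreover v_ℓ = v_{ℓ+4} for 0 ≤ ℓ ≤ 3. -/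
namespace Stmt12Aux

def CC {p : ℕ} (α : (ZMod p)ˣ) (i : ℤ) : Set (ZMod p) :=
  {x | ∃ v : ℤ, x = ((α ^ (8 * v + i) : (ZMod p)ˣ) : ZMod p)}

variable {p : ℕ} {α : (ZMod p)ˣ} {f : ℕ}

lemma CC_congr {i j : ℤ} (h : (8:ℤ) ∣ i - j) : CC α i = CC α j := by
  obtain ⟨d, hd⟩ := h
  ext x
  constructor
  · rintro ⟨v, rfl⟩
    exact ⟨v + d, by rw [show 8*(v+d)+j = 8*v+i by linarith]⟩
  · rintro ⟨v, rfl⟩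
    exact ⟨v - d, by rw [show 8*(v-d)+i = 8*v+j by linarith]⟩

lemma CC_mul {x y : ZMod p} {i j : ℤ} (hx : x ∈ CC α i) (hy : y ∈ CC α j) :
    x * y ∈ CC α (i + j) := by
  obtain ⟨u, rfl⟩ := hx; obtain ⟨v, rfl⟩ := hy
  refine ⟨u + v, ?_⟩
  rw [← Units.val_mul, ← zpow_add, show (8*(u+v)+(i+j)) = (8*u+i)+(8*v+j) by ring]

lemma CC_inv [Fact p.Prime] {x : ZMod p} {i : ℤ} (hx : x ∈ CC α i) : x⁻¹ ∈ CC α (-i) := by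
  obtain ⟨u, rfl⟩ := hx
  refine ⟨-u, ?_⟩
  rw [← Units.val_inv_eq_inv_val, ← zpow_neg, show (8*(-u)+(-i)) = -(8*u+i) by ring]

lemma CC_ne_zero [Fact p.Prime] {x : ZMod p} {i : ℤ} (hx : x ∈ CC α i) : x ≠ 0 := by
  obtain ⟨u, rfl⟩ := hx
  exact Units.ne_zero _

lemma CC_dvd (hkey : ∀ a b : ℤ, α ^ a = α ^ b ↔ (8 * (f:ℤ)) ∣ a - b)
    {x : ZMod p} {i j : ℤ} (hi : x ∈ CC α i) (hj : x ∈ CC α j) : (8:ℤ) ∣ i - j := by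
  obtain ⟨u, hu⟩ := hi; obtain ⟨v, hv⟩ := hj
  have h2 : α ^ (8*u+i) = α ^ (8*v+j) := Units.ext (hu.symm.trans hv)
  obtain ⟨k, hk⟩ := (hkey _ _).1 h2
  exact ⟨(f:ℤ)*k - u + v, by linear_combination hk⟩

lemma ncard_one_add (hkey : ∀ a b : ℤ, α ^ a = α ^ b ↔ (8 * (f:ℤ)) ∣ a - b)
    (hf : 0 < f) (i j : ℤ) :
    {x : ZMod p | x ∈ CC α i ∧ (1 + x) ∈ CC α j}.ncard =
    (Finset.filter (fun uv : ℕ × ℕ =>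
        (1 : ZMod p) + ((α ^ (8 * (uv.1 : ℤ) + i) : (ZMod p)ˣ) : ZMod p)
          = ((α ^ (8 * (uv.2 : ℤ) + j) : (ZMod p)ˣ) : ZMod p))
      (Finset.range f ×ˢ Finset.range f)).card := by
  classical
  set F := Finset.filter (fun uv : ℕ × ℕ =>
        (1 : ZMod p) + ((α ^ (8 * (uv.1 : ℤ) + i) : (ZMod p)ˣ) : ZMod p)
          = ((α ^ (8 * (uv.2 : ℤ) + j) : (ZMod p)ˣ) : ZMod p))
      (Finset.range f ×ˢ Finset.range f) with hF
  set g : ℕ × ℕ → ZMod p := fun uv => ((α ^ (8 * (uv.1 : ℤ) + i) : (ZMod p)ˣ) : ZMod p) with hg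
  have hmemF : ∀ uv : ℕ × ℕ, uv ∈ F ↔ uv.1 < f ∧ uv.2 < f ∧
      (1 : ZMod p) + ((α ^ (8 * (uv.1 : ℤ) + i) : (ZMod p)ˣ) : ZMod p)
          = ((α ^ (8 * (uv.2 : ℤ) + j) : (ZMod p)ˣ) : ZMod p) := by
    intro uv
    simp [hF, Finset.mem_filter, Finset.mem_product, and_assoc]
  have hcancel : ∀ (c : ℤ) (u u' : ℕ), u < f → u' < f →
      α ^ (8 * (u:ℤ) + c) = α ^ (8 * (u':ℤ) + c) → u = u' := by
    intro c u u' hu hu' he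
    have hd := (hkey _ _).1 he
    have hd2 : (f:ℤ) ∣ ((u:ℤ) - u') := by
      have : (8:ℤ) * (f:ℤ) ∣ 8 * ((u:ℤ) - u') := by
        obtain ⟨k, hk⟩ := hd; exact ⟨k, by linear_combination hk⟩
      exact (mul_dvd_mul_iff_left (by norm_num : (8:ℤ) ≠ 0)).1 this
    have : ((u:ℤ) - u') = 0 := by
      refine Int.eq_zero_of_abs_lt_dvd hd2 ?_
      rw [abs_lt]; constructor <;> [linarith [Int.ofNat_lt.2 hu']; linarith [Int.ofNat_lt.2 hu]]
    omega
  have hinj : Set.InjOn g ↑F := by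
    intro uv h1 uv' h2 heq
    rw [Finset.mem_coe, hmemF] at h1 h2
    obtain ⟨hu1, hv1, he1⟩ := h1
    obtain ⟨hu2, hv2, he2⟩ := h2
    have hu : α ^ (8 * (uv.1:ℤ) + i) = α ^ (8 * (uv'.1:ℤ) + i) := Units.ext heq
    have h1eq : uv.1 = uv'.1 := hcancel i _ _ hu1 hu2 hu
    have hv : α ^ (8 * (uv.2:ℤ) + j) = α ^ (8 * (uv'.2:ℤ) + j) := by
      apply Units.ext
      rw [← he1, ← he2, hu]
    exact Prod.ext h1eq (hcancel j _ _ hv1 hv2 hv)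
  have hred : ∀ (c w : ℤ), ∃ u : ℕ, u < f ∧
      α ^ (8 * (u:ℤ) + c) = α ^ (8 * w + c) := by
    intro c w
    have hfz : (0:ℤ) < (f:ℤ) := by exact_mod_cast hf
    refine ⟨(w % (f:ℤ)).toNat, ?_, ?_⟩
    · have h1 : w % (f:ℤ) < f := Int.emod_lt_of_pos w hfz
      omega
    · have h0 : (0:ℤ) ≤ w % (f:ℤ) := Int.emod_nonneg w hfz.ne'
      rw [Int.toNat_of_nonneg h0]
      refine (hkey _ _).2 ⟨-(w / (f:ℤ)), ?_⟩
      have := Int.emod_def w (f:ℤ)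
      linear_combination 8 * this
  have himg : {x : ZMod p | x ∈ CC α i ∧ (1 + x) ∈ CC α j} = g '' ↑F := by
    ext x
    constructor
    · rintro ⟨⟨w, rfl⟩, ⟨w', he⟩⟩
      obtain ⟨u, hu, hue⟩ := hred i w
      obtain ⟨v', hv, hve⟩ := hred j w'
      refine ⟨(u, v'), ?_, ?_⟩
      · rw [Finset.mem_coe, hmemF]
        refine ⟨hu, hv, ?_⟩
        simp only
        rw [hue, hve, ← he]
      · simp only [hg]
        rw [hue]
    · rintro ⟨uv, hm, rfl⟩
      rw [Finset.mem_coe, hmemF] at hm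
      exact ⟨⟨uv.1, rfl⟩, ⟨uv.2, hm.2.2⟩⟩
  rw [himg, Set.ncard_image_of_injOn hinj, Set.ncard_coe_finset]

lemma pair_ncard [Fact p.Prime] {h : ZMod p} {a b l : ℤ} (hh : h ∈ CC α l) :
    {st : ZMod p × ZMod p | st.1 ∈ CC α a ∧ st.2 ∈ CC α b ∧ st.1 + st.2 = h}.ncard
      = {x : ZMod p | x ∈ CC α (b - a) ∧ (1 + x) ∈ CC α (l - a)}.ncard := by
  classical
  have hh0 : h ≠ 0 := CC_ne_zero hh
  set g : ZMod p → ZMod p × ZMod p := fun x => (h * (1+x)⁻¹, h * x * (1+x)⁻¹) with hg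
  set Q : Set (ZMod p) := {x : ZMod p | x ∈ CC α (b - a) ∧ (1 + x) ∈ CC α (l - a)} with hQ
  have hinj : Set.InjOn g Q := by
    intro x hx x' hx' heq
    have h1 : (1:ZMod p) + x ≠ 0 := CC_ne_zero hx.2
    have h1' : (1:ZMod p) + x' ≠ 0 := CC_ne_zero hx'.2
    have := congrArg Prod.fst heq
    simp only [hg] at this
    have h2 : ((1:ZMod p)+x)⁻¹ = (1+x')⁻¹ := mul_left_cancel₀ hh0 this
    have h3 : (1:ZMod p)+x = 1+x' := by
      rw [← inv_inv ((1:ZMod p)+x), h2, inv_inv]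
    exact add_left_cancel h3
  have himg : {st : ZMod p × ZMod p | st.1 ∈ CC α a ∧ st.2 ∈ CC α b ∧ st.1 + st.2 = h}
      = g '' Q := by
    ext st
    constructor
    · rintro ⟨hs, ht, hsum⟩
      have hs0 : st.1 ≠ 0 := CC_ne_zero hs
      refine ⟨st.2 * st.1⁻¹, ⟨?_, ?_⟩, ?_⟩
      · have := CC_mul ht (CC_inv hs)
        rwa [CC_congr (i := b + -a) (j := b - a) ⟨0, by ring⟩] at this
      · have h1x : (1:ZMod p) + st.2 * st.1⁻¹ = h * st.1⁻¹ := by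
          field_simp
          linear_combination hsum
        rw [h1x]
        have := CC_mul hh (CC_inv hs)
        rwa [CC_congr (i := l + -a) (j := l - a) ⟨0, by ring⟩] at this
      · have h1x : (1:ZMod p) + st.2 * st.1⁻¹ = h * st.1⁻¹ := by
          field_simp
          linear_combination hsum
        simp only [hg, h1x]
        have : (st.1 : ZMod p) ≠ 0 := hs0
        ext
        · simp only
          field_simp
        · simp only
          field_simp
    · rintro ⟨x, ⟨hx1, hx2⟩, rfl⟩
      have h1 : (1:ZMod p) + x ≠ 0 := CC_ne_zero hx2
      have hsmem : h * (1+x)⁻¹ ∈ CC α a := by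
        have := CC_mul hh (CC_inv hx2)
        rwa [CC_congr (i := l + -(l-a)) (j := a) ⟨0, by ring⟩] at this
      refine ⟨hsmem, ?_, ?_⟩
      · show h * x * (1+x)⁻¹ ∈ CC α b
        have h2 : h * x * (1+x)⁻¹ = (h * (1+x)⁻¹) * x := by ring
        rw [h2]
        have := CC_mul hsmem hx1
        rwa [CC_congr (i := a + (b - a)) (j := b) ⟨0, by ring⟩] at this
      · show h * (1+x)⁻¹ + h * x * (1+x)⁻¹ = h
        field_simp
  rw [himg, Set.ncard_image_of_injOn hinj]

lemma shift_ncard [Fact p.Prime] (h : ZMod p) :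
    {st : ZMod p × ZMod p | st.1 ∈ CC α 0 ∪ CC α 1 ∧ st.2 ∈ CC α 4 ∪ CC α 5
        ∧ st.1 + st.2 = h}.ncard
      = {st : ZMod p × ZMod p | st.1 ∈ CC α 0 ∪ CC α 1 ∧ st.2 ∈ CC α 4 ∪ CC α 5
        ∧ st.1 + st.2 = h * ((α ^ (4:ℤ) : (ZMod p)ˣ) : ZMod p)}.ncard := by
  classical
  set w : ZMod p := ((α ^ (4:ℤ) : (ZMod p)ˣ) : ZMod p) with hwdef
  have hw4 : w ∈ CC α 4 := ⟨0, by rw [hwdef, show (8*(0:ℤ)+4) = (4:ℤ) by norm_num]⟩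
  have hw0 : w ≠ 0 := CC_ne_zero hw4
  set e : ZMod p × ZMod p → ZMod p × ZMod p := fun st => (st.2 * w, st.1 * w) with he
  have hinj : Function.Injective e := by
    intro st st' heq
    have h1 := congrArg Prod.fst heq
    have h2 := congrArg Prod.snd heq
    simp only [he] at h1 h2
    exact Prod.ext (mul_right_cancel₀ hw0 h2) (mul_right_cancel₀ hw0 h1)
  have himg : {st : ZMod p × ZMod p | st.1 ∈ CC α 0 ∪ CC α 1 ∧ st.2 ∈ CC α 4 ∪ CC α 5
        ∧ st.1 + st.2 = h * w}
      = e '' {st : ZMod p × ZMod p | st.1 ∈ CC α 0 ∪ CC α 1 ∧ st.2 ∈ CC α 4 ∪ CC α 5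
        ∧ st.1 + st.2 = h} := by
    ext st
    constructor
    · rintro ⟨hs, ht, hsum⟩
      refine ⟨(st.2 * w⁻¹, st.1 * w⁻¹), ⟨?_, ?_, ?_⟩, ?_⟩
      · rcases ht with ht | ht
        · exact Or.inl (by
            have := CC_mul ht (CC_inv hw4)
            rwa [CC_congr (i := (4:ℤ) + -4) (j := 0) ⟨0, by ring⟩] at this)
        · exact Or.inr (by
            have := CC_mul ht (CC_inv hw4)
            rwa [CC_congr (i := (5:ℤ) + -4) (j := 1) ⟨0, by ring⟩] at this)
      · rcases hs with hs | hs
        · exact Or.inl (by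
            have := CC_mul hs (CC_inv hw4)
            rwa [CC_congr (i := (0:ℤ) + -4) (j := 4) ⟨-1, by ring⟩] at this)
        · exact Or.inr (by
            have := CC_mul hs (CC_inv hw4)
            rwa [CC_congr (i := (1:ℤ) + -4) (j := 5) ⟨-1, by ring⟩] at this)
      · show st.2 * w⁻¹ + st.1 * w⁻¹ = h
        field_simp
        linear_combination hsum
      · show (st.1 * w⁻¹ * w, st.2 * w⁻¹ * w) = st
        have e1 : st.1 * w⁻¹ * w = st.1 := by field_simp
        have e2 : st.2 * w⁻¹ * w = st.2 := by field_simp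
        rw [e1, e2]
    · rintro ⟨st', ⟨hs, ht, hsum⟩, rfl⟩
      refine ⟨?_, ?_, ?_⟩
      · show st'.2 * w ∈ CC α 0 ∪ CC α 1
        rcases ht with ht | ht
        · exact Or.inl (by
            have := CC_mul ht hw4
            rwa [CC_congr (i := (4:ℤ) + 4) (j := 0) ⟨1, by ring⟩] at this)
        · exact Or.inr (by
            have := CC_mul ht hw4
            rwa [CC_congr (i := (5:ℤ) + 4) (j := 1) ⟨1, by ring⟩] at this)
      · show st'.1 * w ∈ CC α 4 ∪ CC α 5
        rcases hs with hs | hs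
        · exact Or.inl (by
            have := CC_mul hs hw4
            rwa [CC_congr (i := (0:ℤ) + 4) (j := 4) ⟨0, by ring⟩] at this)
        · exact Or.inr (by
            have := CC_mul hs hw4
            rwa [CC_congr (i := (1:ℤ) + 4) (j := 5) ⟨0, by ring⟩] at this)
      · show st'.2 * w + st'.1 * w = h * w
        linear_combination w * hsum
  rw [himg, Set.ncard_image_of_injective _ hinj]

end Stmt12Aux
open Stmt12Aux

/-- Let `p ≡ 1 (mod 16)` be prime, `α` a generator of `(ℤ/pℤ)ˣ`, `C i` the order-8
cyclotomic cosets and `N i j` the order-8 cyclotomic numbers (indices mod 8). With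
`S = C 0 ∪ C 1` and `T = C 4 ∪ C 5`, for `0 ≤ ℓ ≤ 7` and `h ∈ C ℓ` the number of
pairs `(s, t) ∈ S × T` with `s + t = h` equals
`v ℓ = N 4 ℓ + N 5 ℓ + N 3 (ℓ- 1) + N 4 (ℓ- 1)`, and `v ℓ = v (ℓ+4)` for `0 ≤ ℓ ≤ 3`. -/
theorem stmt_12 (p : ℕ) (hp : p.Prime) (h16 : p % 16 = 1)
    (α : (ZMod p)ˣ) (hα : ∀ x : (ZMod p)ˣ, x ∈ Subgroup.zpowers α)
    (C : ℤ → Set (ZMod p))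
    (hC : ∀ i : ℤ, C i = {x : ZMod p | ∃ v : ℤ, x = ((α ^ (8 * v + i) : (ZMod p)ˣ) : ZMod p)})
    (N : ℤ → ℤ → ℕ)
    (hN : ∀ i j : ℤ, N i j = (Finset.filter
      (fun uv : ℕ × ℕ => (1 : ZMod p) + ((α ^ (8 * (uv.1 : ℤ) + i) : (ZMod p)ˣ) : ZMod p)
        = ((α ^ (8 * (uv.2 : ℤ) + j) : (ZMod p)ˣ) : ZMod p))
      (Finset.range ((p - 1) / 8) ×ˢ Finset.range ((p - 1) / 8))).card)
    (S T : Set (ZMod p)) (hS : S = C 0 ∪ C 1) (hT : T = C 4 ∪ C 5)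
    (v : ℤ → ℕ)
    (hv : ∀ ℓ : ℤ, v ℓ = N 4 (ℓ % 8) + N 5 (ℓ % 8)
      + N 3 ((ℓ - 1) % 8) + N 4 ((ℓ - 1) % 8)) :
    (∀ ℓ : ℤ, 0 ≤ ℓ → ℓ ≤ 7 → ∀ h ∈ C ℓ,
      {st : ZMod p × ZMod p | st.1 ∈ S ∧ st.2 ∈ T ∧ st.1 + st.2 = h}.ncard = v ℓ) ∧
    (∀ ℓ : ℤ, 0 ≤ ℓ → ℓ ≤ 3 → v ℓ = v (ℓ + 4)) := by
  classical
  haveI : Fact p.Prime := ⟨hp⟩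
  have hp2 := hp.two_le
  set f : ℕ := (p - 1) / 8 with hfdef
  have h8f : 8 * f = p - 1 := by omega
  have hf0 : 0 < f := by omega
  have hord : orderOf α = p - 1 := by
    have h1 : orderOf α = Nat.card (ZMod p)ˣ := orderOf_eq_card_of_forall_mem_zpowers hα
    rw [Nat.card_eq_fintype_card, ZMod.card_units p] at h1
    exact h1
  have hcast : ((orderOf α : ℕ) : ℤ) = 8 * (f:ℤ) := by
    rw [hord]; omega
  have hkey : ∀ a b : ℤ, α ^ a = α ^ b ↔ (8 * (f:ℤ)) ∣ a - b := by
    intro a b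
    constructor
    · intro he
      have h1 : α ^ (a - b) = 1 := by
        rw [zpow_sub, he, mul_inv_cancel]
      have h2 : ((orderOf α : ℕ) : ℤ) ∣ a - b := orderOf_dvd_iff_zpow_eq_one.2 h1
      rwa [hcast] at h2
    · intro hd
      have h2 : ((orderOf α : ℕ) : ℤ) ∣ a - b := by rwa [hcast]
      have h1 := orderOf_dvd_iff_zpow_eq_one.1 h2
      rwa [zpow_sub, mul_inv_eq_one] at h1
  have hC' : ∀ i : ℤ, C i = CC α i := hC
  have hQN : ∀ i j i' j' : ℤ, (8:ℤ) ∣ i' - i → (8:ℤ) ∣ j' - j →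
      {x : ZMod p | x ∈ CC α i' ∧ (1 + x) ∈ CC α j'}.ncard = N i j := by
    intro i j i' j' h1 h2
    rw [CC_congr h1, CC_congr h2, ncard_one_add hkey hf0 i j, hN i j]
  have main : ∀ ℓ : ℤ, 0 ≤ ℓ → ℓ ≤ 7 → ∀ h ∈ C ℓ,
      {st : ZMod p × ZMod p | st.1 ∈ S ∧ st.2 ∈ T ∧ st.1 + st.2 = h}.ncard = v ℓ := by
    intro ℓ _ _ h hmem
    rw [hC'] at hmem
    simp only [hS, hT, hC']
    have hdec : {st : ZMod p × ZMod p | st.1 ∈ CC α 0 ∪ CC α 1 ∧ st.2 ∈ CC α 4 ∪ CC α 5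
          ∧ st.1 + st.2 = h}
        = ({st : ZMod p × ZMod p | st.1 ∈ CC α 0 ∧ st.2 ∈ CC α 4 ∧ st.1 + st.2 = h}
            ∪ {st : ZMod p × ZMod p | st.1 ∈ CC α 1 ∧ st.2 ∈ CC α 4 ∧ st.1 + st.2 = h})
          ∪ ({st : ZMod p × ZMod p | st.1 ∈ CC α 0 ∧ st.2 ∈ CC α 5 ∧ st.1 + st.2 = h}
            ∪ {st : ZMod p × ZMod p | st.1 ∈ CC α 1 ∧ st.2 ∈ CC α 5 ∧ st.1 + st.2 = h}) := by
      ext st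
      simp only [Set.mem_union, Set.mem_setOf_eq]
      tauto
    rw [hdec]
    have hdisj1 : ∀ a b a' b' : ℤ, ¬ ((8:ℤ) ∣ a - a') →
        Disjoint {st : ZMod p × ZMod p | st.1 ∈ CC α a ∧ st.2 ∈ CC α b ∧ st.1 + st.2 = h}
          {st : ZMod p × ZMod p | st.1 ∈ CC α a' ∧ st.2 ∈ CC α b' ∧ st.1 + st.2 = h} := by
      intro a b a' b' hnd
      rw [Set.disjoint_left]
      rintro st ⟨h1, _, _⟩ ⟨h1', _, _⟩
      exact hnd (CC_dvd hkey h1 h1')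
    have hdisj2 : ∀ a b a' b' : ℤ, ¬ ((8:ℤ) ∣ b - b') →
        Disjoint {st : ZMod p × ZMod p | st.1 ∈ CC α a ∧ st.2 ∈ CC α b ∧ st.1 + st.2 = h}
          {st : ZMod p × ZMod p | st.1 ∈ CC α a' ∧ st.2 ∈ CC α b' ∧ st.1 + st.2 = h} := by
      intro a b a' b' hnd
      rw [Set.disjoint_left]
      rintro st ⟨_, h2, _⟩ ⟨_, h2', _⟩
      exact hnd (CC_dvd hkey h2 h2')
    rw [Set.ncard_union_eq (by
        refine Set.disjoint_union_left.2 ⟨?_, ?_⟩ <;>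
          refine Set.disjoint_union_right.2 ⟨?_, ?_⟩ <;>
            exact hdisj2 _ _ _ _ (by omega)) (Set.toFinite _) (Set.toFinite _),
      Set.ncard_union_eq (hdisj1 0 4 1 4 (by omega)) (Set.toFinite _) (Set.toFinite _),
      Set.ncard_union_eq (hdisj1 0 5 1 5 (by omega)) (Set.toFinite _) (Set.toFinite _)]
    have c04 : {st : ZMod p × ZMod p | st.1 ∈ CC α 0 ∧ st.2 ∈ CC α 4 ∧ st.1 + st.2 = h}.ncard
        = N 4 (ℓ % 8) := by
      rw [pair_ncard hmem]
      exact hQN 4 (ℓ % 8) (4 - 0) (ℓ - 0) (by omega) (by omega)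
    have c14 : {st : ZMod p × ZMod p | st.1 ∈ CC α 1 ∧ st.2 ∈ CC α 4 ∧ st.1 + st.2 = h}.ncard
        = N 3 ((ℓ - 1) % 8) := by
      rw [pair_ncard hmem]
      exact hQN 3 ((ℓ - 1) % 8) (4 - 1) (ℓ - 1) (by omega) (by omega)
    have c05 : {st : ZMod p × ZMod p | st.1 ∈ CC α 0 ∧ st.2 ∈ CC α 5 ∧ st.1 + st.2 = h}.ncard
        = N 5 (ℓ % 8) := by
      rw [pair_ncard hmem]
      exact hQN 5 (ℓ % 8) (5 - 0) (ℓ - 0) (by omega) (by omega)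
    have c15 : {st : ZMod p × ZMod p | st.1 ∈ CC α 1 ∧ st.2 ∈ CC α 5 ∧ st.1 + st.2 = h}.ncard
        = N 4 ((ℓ - 1) % 8) := by
      rw [pair_ncard hmem]
      exact hQN 4 ((ℓ - 1) % 8) (5 - 1) (ℓ - 1) (by omega) (by omega)
    rw [c04, c14, c05, c15, hv ℓ]
    omega
  refine ⟨main, ?_⟩
  intro ℓ h0 h3
  set h : ZMod p := ((α ^ (8 * 0 + ℓ) : (ZMod p)ˣ) : ZMod p) with hhdef
  have hmem : h ∈ CC α ℓ := ⟨0, rfl⟩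
  have hmemC : h ∈ C ℓ := by rw [hC']; exact hmem
  have e1 := main ℓ h0 (by omega) h hmemC
  set w : ZMod p := ((α ^ (4:ℤ) : (ZMod p)ˣ) : ZMod p) with hwdef
  have hw4 : w ∈ CC α 4 := ⟨0, by rw [hwdef, show (8*(0:ℤ)+4) = (4:ℤ) by norm_num]⟩
  have hmem2 : h * w ∈ C (ℓ + 4) := by
    rw [hC']
    exact CC_mul hmem hw4
  have e2 := main (ℓ + 4) (by omega) (by omega) (h * w) hmem2
  rw [← e1, ← e2]
  simp only [hS, hT, hC']
  exact shift_ncard h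
end

section
/- Let p be a prime with p ≡ 1 (mod 16), let α be a generator of the multiplicative group of ℤ/pℤ, let C_i (indices mod 8) be the order-8 cyclotomic cosets, and let (i,j) (indices mod 8) be the order-8 cyclotomic numbers. Let S = C_0 ∪ C_7 and T = C_3 ∪ C_4. Then for every ℓ with 0 ≤ ℓ ≤ 7 and every h ∈ C_ℓ, the number of pairs (s,t) with s ∈ S, t ∈ T, and s + t = h equals x_ℓ := (3,ℓ) + (4,ℓ) + (4,ℓ+1) + (5,ℓ+1) (indices taken mod 8); moreover x_ℓ = x_{ℓ+4} for 0 ≤ ℓ ≤ 3. -/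
/-- Let `p ≡ 1 (mod 16)` be prime, `α` a generator of `(ℤ/pℤ)ˣ`, `C i` the order-8
cyclotomic cosets and `N i j` the order-8 cyclotomic numbers (indices mod 8). With
`S = C 0 ∪ C 7` and `T = C 3 ∪ C 4`, for `0 ≤ ℓ ≤ 7` and `h ∈ C ℓ` the number of
pairs `(s, t) ∈ S × T` with `s + t = h` equals
`x ℓ = N 3 ℓ + N 4 ℓ + N 4 (ℓ+ 1) + N 5 (ℓ+ 1)`, and `x ℓ = x (ℓ+4)` for `0 ≤ ℓ ≤ 3`. -/
theorem stmt_13 (p : ℕ) (hp : p.Prime) (h16 : p % 16 = 1)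
    (α : (ZMod p)ˣ) (hα : ∀ x : (ZMod p)ˣ, x ∈ Subgroup.zpowers α)
    (C : ℤ → Set (ZMod p))
    (hC : ∀ i : ℤ, C i = {x : ZMod p | ∃ v : ℤ, x = ((α ^ (8 * v + i) : (ZMod p)ˣ) : ZMod p)})
    (N : ℤ → ℤ → ℕ)
    (hN : ∀ i j : ℤ, N i j = (Finset.filter
      (fun uv : ℕ × ℕ => (1 : ZMod p) + ((α ^ (8 * (uv.1 : ℤ) + i) : (ZMod p)ˣ) : ZMod p)
        = ((α ^ (8 * (uv.2 : ℤ) + j) : (ZMod p)ˣ) : ZMod p))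
      (Finset.range ((p - 1) / 8) ×ˢ Finset.range ((p - 1) / 8))).card)
    (S T : Set (ZMod p)) (hS : S = C 0 ∪ C 7) (hT : T = C 3 ∪ C 4)
    (x : ℤ → ℕ)
    (hx : ∀ ℓ : ℤ, x ℓ = N 3 (ℓ % 8) + N 4 (ℓ % 8)
      + N 4 ((ℓ + 1) % 8) + N 5 ((ℓ + 1) % 8)) :
    (∀ ℓ : ℤ, 0 ≤ ℓ → ℓ ≤ 7 → ∀ h ∈ C ℓ,
      {st : ZMod p × ZMod p | st.1 ∈ S ∧ st.2 ∈ T ∧ st.1 + st.2 = h}.ncard = x ℓ) ∧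
    (∀ ℓ : ℤ, 0 ≤ ℓ → ℓ ≤ 3 → x ℓ = x (ℓ + 4)) := by
  haveI : Fact p.Prime := ⟨hp⟩
  haveI : NeZero p := ⟨hp.ne_zero⟩
  have hp17 : 17 ≤ p := by have := hp.two_le; omega
  set f : ℕ := (p - 1) / 8 with hfdef
  have hpf : p - 1 = 8 * f := by omega
  have hfpos : 0 < f := by omega
  have hf2 : 2 ∣ f := by omega
  have hcard : Fintype.card (ZMod p)ˣ = 8 * f := by
    rw [ZMod.card_units_eq_totient, Nat.totient_prime hp]; omega
  have hord : orderOf α = 8 * f := by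
    have := orderOf_eq_card_of_forall_mem_zpowers hα
    rwa [Nat.card_eq_fintype_card, hcard] at this
  have hfz : (0 : ℤ) < (f : ℤ) := by exact_mod_cast hfpos
  -- key exponent criterion
  have key : ∀ k l : ℤ, α ^ k = α ^ l ↔ (8 * (f : ℤ)) ∣ (k - l) := by
    intro k l
    have h1 : α ^ k = α ^ l ↔ α ^ (k - l) = 1 := by
      rw [zpow_sub, mul_inv_eq_one]
    rw [h1, ← orderOf_dvd_iff_zpow_eq_one, hord]
    push_cast
    rfl
  -- membership criteria
  have memC : ∀ k i : ℤ, ((α ^ k : (ZMod p)ˣ) : ZMod p) ∈ C i ↔ (8 : ℤ) ∣ (k - i) := by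
    intro k i
    rw [hC]
    simp only [Set.mem_setOf_eq]
    constructor
    · rintro ⟨v, hv⟩
      obtain ⟨c, hc⟩ := (key _ _).1 (Units.ext hv)
      exact ⟨(f : ℤ) * c + v, by linarith⟩
    · rintro ⟨c, hc⟩
      refine ⟨c, ?_⟩
      rw [show k = 8 * c + i by omega]
  have memC' : ∀ (z : ZMod p) (i : ℤ), z ∈ C i ↔
      ∃ k : ℤ, z = ((α ^ k : (ZMod p)ˣ) : ZMod p) ∧ (8 : ℤ) ∣ (k - i) := by
    intro z i
    constructor
    · intro hz
      rw [hC] at hz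
      obtain ⟨v, hv⟩ := hz
      exact ⟨8 * v + i, hv, ⟨v, by ring⟩⟩
    · rintro ⟨k, rfl, hk⟩
      exact (memC k i).2 hk
  have Cne : ∀ (z : ZMod p) (i : ℤ), z ∈ C i → z ≠ 0 := by
    intro z i hz
    obtain ⟨k, rfl, -⟩ := (memC' z i).1 hz
    exact Units.ne_zero _
  have Cmod : ∀ i j : ℤ, (8 : ℤ) ∣ (i - j) → C i = C j := by
    intro i j hij
    ext z
    rw [memC', memC']
    constructor
    · rintro ⟨k, rfl, hk⟩; exact ⟨k, rfl, by omega⟩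
    · rintro ⟨k, rfl, hk⟩; exact ⟨k, rfl, by omega⟩
  have Cmul : ∀ (x y : ZMod p) (a b : ℤ), x ∈ C a → y ∈ C b → x * y ∈ C (a + b) := by
    intro x y a b hx' hy'
    obtain ⟨k, rfl, hk⟩ := (memC' x a).1 hx'
    obtain ⟨l, rfl, hl⟩ := (memC' y b).1 hy'
    refine (memC' _ _).2 ⟨k + l, ?_, by omega⟩
    rw [zpow_add, Units.val_mul]
  have Cinv : ∀ (x : ZMod p) (a : ℤ), x ∈ C a → x⁻¹ ∈ C (-a) := by
    intro x a hx'
    obtain ⟨k, rfl, hk⟩ := (memC' x a).1 hx'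
    refine (memC' _ _).2 ⟨-k, ?_, by omega⟩
    rw [zpow_neg, Units.val_inv_eq_inv_val]
  have Cneg1 : (-1 : ZMod p) ∈ C 0 := by
    have h1 : α ^ (8 * (f : ℤ)) = 1 := by
      have := (key (8 * (f : ℤ)) 0).2 ⟨1, by ring⟩
      simpa using this
    have hmul : α ^ (4 * (f : ℤ)) * α ^ (4 * (f : ℤ)) = 1 := by
      rw [← zpow_add, show (4 * (f : ℤ) + 4 * f) = 8 * f by ring]
      exact h1
    have hne : α ^ (4 * (f : ℤ)) ≠ 1 := by
      intro hcon
      have h0 : α ^ (4 * (f : ℤ)) = α ^ (0 : ℤ) := by simpa using hcon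
      obtain ⟨c, hc⟩ := (key _ _).1 h0
      have : (f : ℤ) * (8 * c - 4) = 0 := by linarith
      rcases mul_eq_zero.mp this with h | h
      · omega
      · omega
    have hval : ((α ^ (4 * (f : ℤ)) : (ZMod p)ˣ) : ZMod p)
        * ((α ^ (4 * (f : ℤ)) : (ZMod p)ˣ) : ZMod p) = 1 := by
      rw [← Units.val_mul, hmul, Units.val_one]
    rcases mul_self_eq_one_iff.mp hval with h | h
    · exact absurd (Units.ext (by rw [h, Units.val_one])) hne
    · obtain ⟨m, hm⟩ := hf2
      refine (memC' _ _).2 ⟨4 * (f : ℤ), h.symm, ⟨m, ?_⟩⟩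
      have hfm : (f : ℤ) = 2 * (m : ℤ) := by exact_mod_cast hm
      rw [hfm]; ring
  have Cneg : ∀ (x : ZMod p) (a : ℤ), x ∈ C a → -x ∈ C a := by
    intro x a hx'
    have := Cmul (-1) x 0 a Cneg1 hx'
    rw [zero_add, neg_one_mul] at this
    exact this
  have Cdisj : ∀ (x : ZMod p) (a b : ℤ), x ∈ C a → x ∈ C b → (8 : ℤ) ∣ (a - b) := by
    intro x a b hxa hxb
    obtain ⟨k, rfl, hk⟩ := (memC' x a).1 hxa
    obtain ⟨l, hl, hk'⟩ := (memC' _ b).1 hxb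
    obtain ⟨c, hc⟩ := (key k l).1 (Units.ext hl)
    have h8 : (8 : ℤ) ∣ (k - l) := ⟨(f : ℤ) * c, by linarith⟩
    omega
  -- reduction of exponents into [0, f)
  have expred : ∀ (k c : ℤ), (8 : ℤ) ∣ (k - c) →
      ∃ u : ℕ, u < f ∧ (α ^ (8 * (u : ℤ) + c) : (ZMod p)ˣ) = α ^ k := by
    intro k c hdvd
    obtain ⟨K, hK⟩ := hdvd
    have hK' : k = c + 8 * K := by omega
    have hr0 : 0 ≤ K % (f : ℤ) := Int.emod_nonneg K (by omega)
    have hrf : K % (f : ℤ) < f := Int.emod_lt_of_pos K hfz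
    refine ⟨(K % (f : ℤ)).toNat, ?_, ?_⟩
    · omega
    · have hu : (((K % (f : ℤ)).toNat : ℤ)) = K % (f : ℤ) := Int.toNat_of_nonneg hr0
      refine (key _ _).2 ⟨-(K / (f : ℤ)), ?_⟩
      rw [hu, hK', Int.emod_def]
      ring
  have expinj : ∀ (u v : ℕ), u < f → v < f → ∀ c : ℤ,
      (α ^ (8 * (u : ℤ) + c) : (ZMod p)ˣ) = α ^ (8 * (v : ℤ) + c) → u = v := by
    intro u v hu hv c he
    obtain ⟨d, hd⟩ := (key _ _).1 he
    have h2 : (u : ℤ) - v = (f : ℤ) * d := by linarith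
    have habs1 : -(f : ℤ) < (u : ℤ) - (v : ℤ) := by omega
    have habs2 : (u : ℤ) - (v : ℤ) < (f : ℤ) := by omega
    have hd0 : d = 0 := by
      by_contra hdne
      rcases lt_or_gt_of_ne hdne with h | h
      · have : (f : ℤ) * d ≤ (f : ℤ) * (-1) := by
          apply mul_le_mul_of_nonneg_left (by omega) (le_of_lt hfz)
        linarith
      · have : (f : ℤ) * 1 ≤ (f : ℤ) * d := by
          apply mul_le_mul_of_nonneg_left (by omega) (le_of_lt hfz)
        linarith
    rw [hd0, mul_zero] at h2
    omega
  -- |B a b| = N a b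
  have hBN : ∀ a b : ℤ, {z : ZMod p | z ∈ C a ∧ 1 + z ∈ C b}.ncard = N a b := by
    intro a b
    rw [hN]
    have hinj : Set.InjOn (fun uv : ℕ × ℕ => ((α ^ (8 * (uv.1 : ℤ) + a) : (ZMod p)ˣ) : ZMod p))
        ↑(Finset.filter
          (fun uv : ℕ × ℕ => (1 : ZMod p) + ((α ^ (8 * (uv.1 : ℤ) + a) : (ZMod p)ˣ) : ZMod p)
            = ((α ^ (8 * (uv.2 : ℤ) + b) : (ZMod p)ˣ) : ZMod p))
          (Finset.range f ×ˢ Finset.range f)) := by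
      rintro ⟨u, v⟩ h1 ⟨u', v'⟩ h2 heq
      simp only [Finset.mem_coe, Finset.mem_filter, Finset.mem_product, Finset.mem_range] at h1 h2
      obtain ⟨⟨hu, hv⟩, hc1⟩ := h1
      obtain ⟨⟨hu', hv'⟩, hc2⟩ := h2
      have e1 : (α ^ (8 * (u : ℤ) + a) : (ZMod p)ˣ) = α ^ (8 * (u' : ℤ) + a) := Units.ext heq
      have euu : u = u' := expinj u u' hu hu' a e1
      subst euu
      have e2 : (α ^ (8 * (v : ℤ) + b) : (ZMod p)ˣ) = α ^ (8 * (v' : ℤ) + b) :=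
        Units.ext (by rw [← hc1, ← hc2])
      have : v = v' := expinj v v' hv hv' b e2
      simp [this]
    have himg : {z : ZMod p | z ∈ C a ∧ 1 + z ∈ C b} =
        (fun uv : ℕ × ℕ => ((α ^ (8 * (uv.1 : ℤ) + a) : (ZMod p)ˣ) : ZMod p)) ''
        ↑(Finset.filter
          (fun uv : ℕ × ℕ => (1 : ZMod p) + ((α ^ (8 * (uv.1 : ℤ) + a) : (ZMod p)ˣ) : ZMod p)
            = ((α ^ (8 * (uv.2 : ℤ) + b) : (ZMod p)ˣ) : ZMod p))
          (Finset.range f ×ˢ Finset.range f)) := by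
      ext z
      simp only [Set.mem_setOf_eq, Set.mem_image, Finset.mem_coe, Finset.mem_filter,
        Finset.mem_product, Finset.mem_range]
      constructor
      · rintro ⟨hz1, hz2⟩
        obtain ⟨k, hk, hk8⟩ := (memC' z a).1 hz1
        obtain ⟨l, hl, hl8⟩ := (memC' (1 + z) b).1 hz2
        obtain ⟨u, hu, hue⟩ := expred k a hk8
        obtain ⟨v, hv, hve⟩ := expred l b hl8
        have e1 : ((α ^ (8 * (u : ℤ) + a) : (ZMod p)ˣ) : ZMod p) = z := by
          rw [hk]; exact congrArg Units.val hue
        have e2 : ((α ^ (8 * (v : ℤ) + b) : (ZMod p)ˣ) : ZMod p) = 1 + z := by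
          rw [hl]; exact congrArg Units.val hve
        exact ⟨(u, v), ⟨⟨hu, hv⟩, by rw [e1, e2]⟩, e1⟩
      · rintro ⟨⟨u, v⟩, ⟨⟨hu, hv⟩, hcond⟩, rfl⟩
        constructor
        · exact (memC (8 * (u : ℤ) + a) a).2 ⟨u, by ring⟩
        · rw [hcond]
          exact (memC (8 * (v : ℤ) + b) b).2 ⟨v, by ring⟩
    rw [himg, Set.ncard_image_of_injOn hinj, Set.ncard_coe_finset]
  -- congruence of B sets
  have hBcongr : ∀ a b a' b' : ℤ, (8 : ℤ) ∣ (a - a') → (8 : ℤ) ∣ (b - b') →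
      {z : ZMod p | z ∈ C a ∧ 1 + z ∈ C b} = {z : ZMod p | z ∈ C a' ∧ 1 + z ∈ C b'} := by
    intro a b a' b' h1 h2
    rw [Cmod a a' h1, Cmod b b' h2]
  -- inversion identity
  have hBinv : ∀ a b : ℤ, {z : ZMod p | z ∈ C a ∧ 1 + z ∈ C b}.ncard
      = {z : ZMod p | z ∈ C (-a) ∧ 1 + z ∈ C (b - a)}.ncard := by
    intro a b
    have himg : (fun z : ZMod p => z⁻¹) '' {z : ZMod p | z ∈ C a ∧ 1 + z ∈ C b}
        = {z : ZMod p | z ∈ C (-a) ∧ 1 + z ∈ C (b - a)} := by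
      ext w
      simp only [Set.mem_image, Set.mem_setOf_eq]
      constructor
      · rintro ⟨z, ⟨h1, h2⟩, rfl⟩
        have hz0 : z ≠ 0 := Cne z a h1
        refine ⟨Cinv z a h1, ?_⟩
        have he : (1 + z) * z⁻¹ = 1 + z⁻¹ := by
          rw [add_mul, one_mul, mul_inv_cancel₀ hz0, add_comm]
        rw [← he]
        have := Cmul _ _ b (-a) h2 (Cinv z a h1)
        rw [show b + -a = b - a by ring] at this
        exact this
      · rintro ⟨h1, h2⟩
        have hw0 : w ≠ 0 := Cne _ _ h1
        refine ⟨w⁻¹, ⟨?_, ?_⟩, inv_inv w⟩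
        · have := Cinv w (-a) h1
          rw [neg_neg] at this
          exact this
        · have he : (1 + w) * w⁻¹ = 1 + w⁻¹ := by
            rw [add_mul, one_mul, mul_inv_cancel₀ hw0, add_comm]
          rw [← he]
          have := Cmul _ _ (b - a) (-(-a)) h2 (Cinv w (-a) h1)
          rw [show (b - a) + -(-a) = b by ring] at this
          exact this
    rw [← himg, Set.ncard_image_of_injOn]
    intro x1 _ x2 _ hx12
    exact inv_injective hx12
  -- symmetry identity
  have hBneg : ∀ a b : ℤ, {z : ZMod p | z ∈ C a ∧ 1 + z ∈ C b}.ncard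
      = {z : ZMod p | z ∈ C b ∧ 1 + z ∈ C a}.ncard := by
    intro a b
    have himg : (fun z : ZMod p => -(1 + z)) '' {z : ZMod p | z ∈ C a ∧ 1 + z ∈ C b}
        = {z : ZMod p | z ∈ C b ∧ 1 + z ∈ C a} := by
      ext w
      simp only [Set.mem_image, Set.mem_setOf_eq]
      constructor
      · rintro ⟨z, ⟨h1, h2⟩, rfl⟩
        refine ⟨Cneg _ _ h2, ?_⟩
        rw [show (1 : ZMod p) + -(1 + z) = -z by ring]
        exact Cneg _ _ h1
      · rintro ⟨h1, h2⟩
        refine ⟨-(1 + w), ⟨Cneg _ _ h2, ?_⟩, by ring⟩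
        rw [show (1 : ZMod p) + -(1 + w) = -w by ring]
        exact Cneg _ _ h1
    rw [← himg, Set.ncard_image_of_injOn]
    intro x1 _ x2 _ hx12
    simp only at hx12
    exact add_left_cancel (neg_injective hx12)
  -- counting pairs in C i × C j summing to h
  have hA : ∀ (ℓ : ℤ) (h : ZMod p), h ∈ C ℓ → ∀ i j : ℤ,
      {st : ZMod p × ZMod p | st.1 ∈ C i ∧ st.2 ∈ C j ∧ st.1 + st.2 = h}.ncard
      = {z : ZMod p | z ∈ C (i - ℓ) ∧ 1 + z ∈ C (j - ℓ)}.ncard := by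
    intro ℓ h hh i j
    have hh0 : h ≠ 0 := Cne h ℓ hh
    have himg : (fun z : ZMod p => (-(h * z), h * (1 + z))) ''
        {z : ZMod p | z ∈ C (i - ℓ) ∧ 1 + z ∈ C (j - ℓ)}
        = {st : ZMod p × ZMod p | st.1 ∈ C i ∧ st.2 ∈ C j ∧ st.1 + st.2 = h} := by
      ext st
      obtain ⟨s, t⟩ := st
      simp only [Set.mem_image, Set.mem_setOf_eq, Prod.mk.injEq]
      constructor
      · rintro ⟨z, ⟨hz1, hz2⟩, he1, he2⟩
        rw [← he1, ← he2]
        refine ⟨?_, ?_, by ring⟩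
        · have := Cneg _ _ (Cmul h z ℓ (i - ℓ) hh hz1)
          rw [show ℓ + (i - ℓ) = i by ring] at this
          exact this
        · have := Cmul h (1 + z) ℓ (j - ℓ) hh hz2
          rw [show ℓ + (j - ℓ) = j by ring] at this
          exact this
      · rintro ⟨h1, h2, h3⟩
        have ht : t = h - s := by rw [← h3]; ring
        have hs' : h * (s * h⁻¹) = s := by
          rw [show s * h⁻¹ = h⁻¹ * s from mul_comm _ _, ← mul_assoc,
            mul_inv_cancel₀ hh0, one_mul]
        refine ⟨-(s * h⁻¹), ⟨?_, ?_⟩, ?_, ?_⟩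
        · have := Cneg _ _ (Cmul s h⁻¹ i (-ℓ) h1 (Cinv h ℓ hh))
          rw [show i + -ℓ = i - ℓ by ring] at this
          exact this
        · have he : t * h⁻¹ = 1 + -(s * h⁻¹) := by
            rw [ht, sub_mul, mul_inv_cancel₀ hh0]; ring
          rw [← he]
          have := Cmul t h⁻¹ j (-ℓ) h2 (Cinv h ℓ hh)
          rw [show j + -ℓ = j - ℓ by ring] at this
          exact this
        · rw [mul_neg, hs', neg_neg]
        · rw [mul_add, mul_one, mul_neg, hs', ht]; ring
    rw [← himg, Set.ncard_image_of_injOn]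
    intro z1 _ z2 _ he
    simp only [Prod.mk.injEq] at he
    exact mul_left_cancel₀ hh0 (neg_injective he.1)
  constructor
  · -- part 1
    intro ℓ hℓ0 hℓ7 h hh
    have hsplit : {st : ZMod p × ZMod p | st.1 ∈ S ∧ st.2 ∈ T ∧ st.1 + st.2 = h} =
        ({st : ZMod p × ZMod p | st.1 ∈ C 0 ∧ st.2 ∈ C 3 ∧ st.1 + st.2 = h} ∪
         {st : ZMod p × ZMod p | st.1 ∈ C 0 ∧ st.2 ∈ C 4 ∧ st.1 + st.2 = h}) ∪
        ({st : ZMod p × ZMod p | st.1 ∈ C 7 ∧ st.2 ∈ C 3 ∧ st.1 + st.2 = h} ∪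
         {st : ZMod p × ZMod p | st.1 ∈ C 7 ∧ st.2 ∈ C 4 ∧ st.1 + st.2 = h}) := by
      rw [hS, hT]
      ext st
      simp only [Set.mem_setOf_eq, Set.mem_union]
      tauto
    have hd1 : Disjoint {st : ZMod p × ZMod p | st.1 ∈ C 0 ∧ st.2 ∈ C 3 ∧ st.1 + st.2 = h}
        {st : ZMod p × ZMod p | st.1 ∈ C 0 ∧ st.2 ∈ C 4 ∧ st.1 + st.2 = h} := by
      rw [Set.disjoint_left]
      rintro st ⟨-, h3, -⟩ ⟨-, h4, -⟩
      have := Cdisj st.2 3 4 h3 h4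
      omega
    have hd2 : Disjoint {st : ZMod p × ZMod p | st.1 ∈ C 7 ∧ st.2 ∈ C 3 ∧ st.1 + st.2 = h}
        {st : ZMod p × ZMod p | st.1 ∈ C 7 ∧ st.2 ∈ C 4 ∧ st.1 + st.2 = h} := by
      rw [Set.disjoint_left]
      rintro st ⟨-, h3, -⟩ ⟨-, h4, -⟩
      have := Cdisj st.2 3 4 h3 h4
      omega
    have hd3 : Disjoint
        ({st : ZMod p × ZMod p | st.1 ∈ C 0 ∧ st.2 ∈ C 3 ∧ st.1 + st.2 = h} ∪
         {st : ZMod p × ZMod p | st.1 ∈ C 0 ∧ st.2 ∈ C 4 ∧ st.1 + st.2 = h})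
        ({st : ZMod p × ZMod p | st.1 ∈ C 7 ∧ st.2 ∈ C 3 ∧ st.1 + st.2 = h} ∪
         {st : ZMod p × ZMod p | st.1 ∈ C 7 ∧ st.2 ∈ C 4 ∧ st.1 + st.2 = h}) := by
      rw [Set.disjoint_left]
      rintro st hst1 hst2
      have h0 : st.1 ∈ C 0 := by rcases hst1 with ⟨h', -⟩ | ⟨h', -⟩ <;> exact h'
      have h7 : st.1 ∈ C 7 := by rcases hst2 with ⟨h', -⟩ | ⟨h', -⟩ <;> exact h'
      have := Cdisj st.1 0 7 h0 h7
      omega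
    rw [hsplit,
      Set.ncard_union_eq hd3 (Set.toFinite _) (Set.toFinite _),
      Set.ncard_union_eq hd1 (Set.toFinite _) (Set.toFinite _),
      Set.ncard_union_eq hd2 (Set.toFinite _) (Set.toFinite _),
      hA ℓ h hh 0 3, hA ℓ h hh 0 4, hA ℓ h hh 7 3, hA ℓ h hh 7 4]
    have t03 : {z : ZMod p | z ∈ C (0 - ℓ) ∧ 1 + z ∈ C (3 - ℓ)}.ncard = N 3 (ℓ % 8) := by
      rw [hBinv (0 - ℓ) (3 - ℓ),
        hBcongr (-(0 - ℓ)) (3 - ℓ - (0 - ℓ)) ℓ 3 (by omega) (by omega),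
        hBneg ℓ 3,
        hBcongr 3 ℓ 3 (ℓ % 8) (by omega) (by omega),
        hBN]
    have t04 : {z : ZMod p | z ∈ C (0 - ℓ) ∧ 1 + z ∈ C (4 - ℓ)}.ncard = N 4 (ℓ % 8) := by
      rw [hBinv (0 - ℓ) (4 - ℓ),
        hBcongr (-(0 - ℓ)) (4 - ℓ - (0 - ℓ)) ℓ 4 (by omega) (by omega),
        hBneg ℓ 4,
        hBcongr 4 ℓ 4 (ℓ % 8) (by omega) (by omega),
        hBN]
    have t73 : {z : ZMod p | z ∈ C (7 - ℓ) ∧ 1 + z ∈ C (3 - ℓ)}.ncard = N 4 ((ℓ + 1) % 8) := by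
      rw [hBinv (7 - ℓ) (3 - ℓ),
        hBcongr (-(7 - ℓ)) (3 - ℓ - (7 - ℓ)) (ℓ + 1) 4 (by omega) (by omega),
        hBneg (ℓ + 1) 4,
        hBcongr 4 (ℓ + 1) 4 ((ℓ + 1) % 8) (by omega) (by omega),
        hBN]
    have t74 : {z : ZMod p | z ∈ C (7 - ℓ) ∧ 1 + z ∈ C (4 - ℓ)}.ncard = N 5 ((ℓ + 1) % 8) := by
      rw [hBinv (7 - ℓ) (4 - ℓ),
        hBcongr (-(7 - ℓ)) (4 - ℓ - (7 - ℓ)) (ℓ + 1) 5 (by omega) (by omega),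
        hBneg (ℓ + 1) 5,
        hBcongr 5 (ℓ + 1) 5 ((ℓ + 1) % 8) (by omega) (by omega),
        hBN]
    rw [t03, t04, t73, t74, hx ℓ]
    omega
  · -- part 2
    intro ℓ hℓ0 hℓ3
    have e1 : N 3 ((ℓ + 4) % 8) = N 5 ((ℓ + 1) % 8) := by
      rw [← hBN 3 ((ℓ + 4) % 8), ← hBN 5 ((ℓ + 1) % 8),
        hBcongr 3 ((ℓ + 4) % 8) 3 (ℓ + 4) (by omega) (by omega),
        hBinv 3 (ℓ + 4),
        hBcongr (-3) (ℓ + 4 - 3) 5 ((ℓ + 1) % 8) (by omega) (by omega)]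
    have e2 : N 4 ((ℓ + 4) % 8) = N 4 (ℓ % 8) := by
      rw [← hBN 4 ((ℓ + 4) % 8), ← hBN 4 (ℓ % 8),
        hBcongr 4 ((ℓ + 4) % 8) 4 (ℓ + 4) (by omega) (by omega),
        hBinv 4 (ℓ + 4),
        hBcongr (-4) (ℓ + 4 - 4) 4 (ℓ % 8) (by omega) (by omega)]
    have e3 : N 4 ((ℓ + 4 + 1) % 8) = N 4 ((ℓ + 1) % 8) := by
      rw [← hBN 4 ((ℓ + 4 + 1) % 8), ← hBN 4 ((ℓ + 1) % 8),
        hBcongr 4 ((ℓ + 4 + 1) % 8) 4 (ℓ + 5) (by omega) (by omega),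
        hBinv 4 (ℓ + 5),
        hBcongr (-4) (ℓ + 5 - 4) 4 ((ℓ + 1) % 8) (by omega) (by omega)]
    have e4 : N 5 ((ℓ + 4 + 1) % 8) = N 3 (ℓ % 8) := by
      rw [← hBN 5 ((ℓ + 4 + 1) % 8), ← hBN 3 (ℓ % 8),
        hBcongr 5 ((ℓ + 4 + 1) % 8) 5 (ℓ + 5) (by omega) (by omega),
        hBinv 5 (ℓ + 5),
        hBcongr (-5) (ℓ + 5 - 5) 3 (ℓ % 8) (by omega) (by omega)]
    rw [hx ℓ, hx (ℓ + 4), e1, e2, e3, e4]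
    omega
end

section
/- Let p be a prime with p ≡ 1 (mod 16), let α be a generator of the multiplicative group of ℤ/pℤ, let C_i (indices mod 8) be the order-8 cyclotomic cosets, and let (i,j) (indices mod 8) be the order-8 cyclotomic numbers. Let S = C_0 ∪ C_5 and T = C_1 ∪ C_4. Then for every ℓ with 0 ≤ ℓ ≤ 7 and every h ∈ C_ℓ, the number of pairs (s,t) with s ∈ S, t ∈ T, and s + t = h equals y_ℓ := (1,ℓ) + (4,ℓ) + (4,ℓ+3) + (7,ℓ+3) (indices taken mod 8); moreover y_ℓ = y_{ℓ+4} for 0 ≤ ℓ ≤ 3. -/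
namespace S14
set_option linter.unusedSectionVars false

variable {p f : ℕ} (α : (ZMod p)ˣ) [Fact p.Prime]

/-- coerced integer power of the generator -/
def E (k : ℤ) : ZMod p := ((α ^ k : (ZMod p)ˣ) : ZMod p)

/-- cyclotomic coset -/
def Cs (i : ℤ) : Set (ZMod p) := {x | ∃ v : ℤ, x = E α (8 * v + i)}

/-- set underlying the cyclotomic number -/
def Msets (i j : ℤ) : Set (ZMod p × ZMod p) :=
  {q | q.1 ∈ Cs α i ∧ q.2 ∈ Cs α j ∧ 1 + q.1 = q.2}

/-- set-theoretic cyclotomic number -/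
noncomputable def Ms (i j : ℤ) : ℕ := (Msets α i j).ncard

lemma E_eq_E (ho : orderOf α = 8 * f) (m n : ℤ) :
    E α m = E α n ↔ (8 * (f : ℤ)) ∣ m - n := by
  have h1 : E α m = E α n ↔ α ^ m = α ^ n :=
    ⟨fun h => Units.ext h, fun h => congrArg Units.val h⟩
  rw [h1, ← mul_inv_eq_one, ← zpow_neg, ← zpow_add, ← sub_eq_add_neg,
    ← orderOf_dvd_iff_zpow_eq_one, ho]
  push_cast
  rfl

lemma E_zero : E α 0 = 1 := by simp [E]

lemma E_mul (m n : ℤ) : E α (m + n) = E α m * E α n := by simp [E, zpow_add]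

lemma E_ne (m : ℤ) : E α m ≠ 0 := Units.ne_zero _

lemma E_inv (m : ℤ) : (E α m)⁻¹ = E α (-m) := by
  simp [E, zpow_neg, Units.val_inv_eq_inv_val]

lemma Cs_congr {i j : ℤ} (h : i % 8 = j % 8) : Cs α i = Cs α j := by
  have h8 : (8 : ℤ) ∣ i - j := by omega
  obtain ⟨k, hk⟩ := h8
  ext x
  constructor <;> rintro ⟨v, rfl⟩
  · exact ⟨v + k, by rw [show 8*(v+k)+j = 8*v+i by linarith]⟩
  · exact ⟨v - k, by rw [show 8*(v-k)+i = 8*v+j by linarith]⟩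

lemma Cs_mul {i j : ℤ} {x y : ZMod p} (hx : x ∈ Cs α i) (hy : y ∈ Cs α j) :
    x * y ∈ Cs α (i + j) := by
  obtain ⟨v, rfl⟩ := hx; obtain ⟨w, rfl⟩ := hy
  exact ⟨v + w, by rw [← E_mul]; ring_nf⟩

lemma Cs_inv {i : ℤ} {x : ZMod p} (hx : x ∈ Cs α i) : x⁻¹ ∈ Cs α (-i) := by
  obtain ⟨v, rfl⟩ := hx
  exact ⟨-v, by rw [E_inv]; ring_nf⟩

lemma Cs_ne {i : ℤ} {x : ZMod p} (hx : x ∈ Cs α i) : x ≠ 0 := by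
  obtain ⟨v, rfl⟩ := hx; exact E_ne α _

lemma Cs_shift {i j : ℤ} {x : ZMod p} (hx : x ∈ Cs α i) (h : i % 8 = j % 8) :
    x ∈ Cs α j := by rw [← Cs_congr α h]; exact hx

lemma neg_one_E (ho : orderOf α = 8 * f) (hfpos : 0 < f) :
    E α (4 * f) = (-1 : ZMod p) := by
  have hsq : E α (4 * f) * E α (4 * f) = 1 := by
    rw [← E_mul]
    have : E α (4 * (f:ℤ) + 4 * f) = E α 0 := by
      rw [E_eq_E α ho]; exact ⟨1, by ring⟩
    rw [this, E_zero]
  have hne : E α (4 * f) ≠ 1 := by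
    intro h1
    have := (E_eq_E α ho (4 * f) 0).mp (by rw [E_zero]; exact h1)
    have := Int.le_of_dvd (by omega) this
    omega
  have hfac : (E α (4 * f) - 1) * (E α (4 * f) + 1) = 0 := by linear_combination hsq
  rcases mul_eq_zero.mp hfac with h | h
  · exact absurd (by linear_combination h) hne
  · linear_combination h

lemma Cs_neg (ho : orderOf α = 8 * f) (hfpos : 0 < f) (hf2 : 2 ∣ f)
    {i : ℤ} {x : ZMod p} (hx : x ∈ Cs α i) : -x ∈ Cs α i := by
  obtain ⟨m, hm⟩ := hf2
  obtain ⟨v, rfl⟩ := hx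
  refine ⟨v + m, ?_⟩
  have h1 : E α (8 * (v + m) + i) = E α (4 * f) * E α (8 * v + i) := by
    rw [← E_mul]
    congr 1
    push_cast [hm]
    ring
  rw [h1, neg_one_E α ho hfpos]
  ring

lemma Cs_disj (ho : orderOf α = 8 * f) {i j : ℤ} (h : i % 8 ≠ j % 8)
    {x : ZMod p} (hx : x ∈ Cs α i) (hy : x ∈ Cs α j) : False := by
  obtain ⟨v, rfl⟩ := hx
  obtain ⟨w, hw⟩ := hy
  rw [E_eq_E α ho] at hw
  obtain ⟨k, hk⟩ := hw
  have h8 : (8:ℤ) ∣ (8 * v + i) - (8 * w + j) := hk ▸ ⟨(f:ℤ) * k, by ring⟩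
  omega

lemma Ms_congr {i i' j j' : ℤ} (hi : i % 8 = i' % 8) (hj : j % 8 = j' % 8) :
    Ms α i j = Ms α i' j' := by
  unfold Ms Msets
  rw [Cs_congr α hi, Cs_congr α hj]

lemma Ms_A (i j : ℤ) : Ms α i j = Ms α (-i) (j - i) := by
  have himg : Msets α (-i) (j - i)
      = (fun q : ZMod p × ZMod p => (q.1⁻¹, q.1⁻¹ * q.2)) '' Msets α i j := by
    ext ⟨x, y⟩
    constructor
    · rintro ⟨hx, hy, hxy⟩
      refine ⟨(x⁻¹, x⁻¹ * y), ⟨?_, ?_, ?_⟩, ?_⟩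
      · have := Cs_inv α hx; rwa [neg_neg] at this
      · have := Cs_mul α (Cs_inv α hx) hy
        exact Cs_shift α this (by omega)
      · have hx0 : x ≠ 0 := Cs_ne α hx
        field_simp
        linear_combination hxy
      · have hx0 : x ≠ 0 := Cs_ne α hx
        simp only [Prod.mk.injEq]
        constructor
        · rw [inv_inv]
        · rw [inv_inv]; field_simp
    · rintro ⟨⟨x', y'⟩, ⟨hx, hy, hxy⟩, heq⟩
      have hx0 : x' ≠ 0 := Cs_ne α hx
      obtain ⟨rfl, rfl⟩ : x'⁻¹ = x ∧ x'⁻¹ * y' = y := by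
        simpa [Prod.ext_iff] using heq
      refine ⟨Cs_inv α hx, ?_, ?_⟩
      · have := Cs_mul α (Cs_inv α hx) hy
        exact Cs_shift α this (by omega)
      · field_simp
        linear_combination hxy
  have hinj : Set.InjOn (fun q : ZMod p × ZMod p => (q.1⁻¹, q.1⁻¹ * q.2)) (Msets α i j) := by
    rintro ⟨x, y⟩ ⟨hx, -, -⟩ ⟨x', y'⟩ ⟨hx', -, -⟩ h
    simp only [Prod.mk.injEq] at h
    obtain ⟨h1, h2⟩ := h
    have hx0 : x ≠ 0 := Cs_ne α hx
    have hxx : x = x' := by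
      have := congrArg (·⁻¹) h1; simpa [inv_inv] using this
    subst hxx
    refine Prod.ext rfl ?_
    exact mul_left_cancel₀ (inv_ne_zero hx0) h2
  unfold Ms
  rw [himg, Set.ncard_image_of_injOn hinj]

lemma Ms_B (ho : orderOf α = 8 * f) (hfpos : 0 < f) (hf2 : 2 ∣ f) (i j : ℤ) :
    Ms α i j = Ms α j i := by
  have himg : Msets α j i
      = (fun q : ZMod p × ZMod p => (-q.2, -q.1)) '' Msets α i j := by
    ext ⟨x, y⟩
    constructor
    · rintro ⟨hx, hy, hxy⟩
      exact ⟨(-y, -x), ⟨Cs_neg α ho hfpos hf2 hy, Cs_neg α ho hfpos hf2 hx,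
        by linear_combination hxy⟩, by simp⟩
    · rintro ⟨⟨x', y'⟩, ⟨hx, hy, hxy⟩, heq⟩
      obtain ⟨rfl, rfl⟩ : -y' = x ∧ -x' = y := by simpa [Prod.ext_iff] using heq
      exact ⟨Cs_neg α ho hfpos hf2 hy, Cs_neg α ho hfpos hf2 hx, by linear_combination hxy⟩
  have hinj : Set.InjOn (fun q : ZMod p × ZMod p => (-q.2, -q.1)) (Msets α i j) := by
    rintro ⟨x, y⟩ - ⟨x', y'⟩ - h
    simp only [Prod.mk.injEq, neg_inj] at h
    exact Prod.ext h.2 h.1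
  unfold Ms
  rw [himg, Set.ncard_image_of_injOn hinj]

/-- `Ms i j = Ms i' j'` whenever `i' ≡ -i` and `j' ≡ j - i (mod 8)` -/
lemma Ms_Acong (i j : ℤ) {i' j' : ℤ} (hi : (-i) % 8 = i' % 8) (hj : (j - i) % 8 = j' % 8) :
    Ms α i j = Ms α i' j' := by
  rw [Ms_A α i j]; exact Ms_congr α hi hj

/-- `Ms i j = Ms i' j'` whenever `i' ≡ j - i` and `j' ≡ -i (mod 8)` -/
lemma Ms_ABcong (ho : orderOf α = 8 * f) (hfpos : 0 < f) (hf2 : 2 ∣ f)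
    (i j : ℤ) {i' j' : ℤ} (hi : (j - i) % 8 = i' % 8) (hj : (-i) % 8 = j' % 8) :
    Ms α i j = Ms α i' j' := by
  rw [Ms_A α i j, Ms_B α ho hfpos hf2]; exact Ms_congr α hi hj

/-- counting pairs summing to `h ∈ Cs ℓ` -/
lemma count_pairs (ho : orderOf α = 8 * f) (hfpos : 0 < f) (hf2 : 2 ∣ f)
    (a b ℓ : ℤ) (h : ZMod p) (hh : h ∈ Cs α ℓ) :
    {st : ZMod p × ZMod p | st.1 ∈ Cs α a ∧ st.2 ∈ Cs α b ∧ st.1 + st.2 = h}.ncard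
      = Ms α (a - ℓ) (b - ℓ) := by
  have hh0 : h ≠ 0 := Cs_ne α hh
  have himg : {st : ZMod p × ZMod p | st.1 ∈ Cs α a ∧ st.2 ∈ Cs α b ∧ st.1 + st.2 = h}
      = (fun q : ZMod p × ZMod p => (-(h * q.1), h * q.2)) '' Msets α (a - ℓ) (b - ℓ) := by
    ext ⟨s, t⟩
    constructor
    · rintro ⟨hs, ht, hst⟩
      refine ⟨(-(h⁻¹ * s), h⁻¹ * t), ⟨?_, ?_, ?_⟩, ?_⟩
      · exact Cs_shift α (Cs_neg α ho hfpos hf2 (Cs_mul α (Cs_inv α hh) hs)) (by omega)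
      · exact Cs_shift α (Cs_mul α (Cs_inv α hh) ht) (by omega)
      · field_simp
        linear_combination -hst
      · simp only [Prod.mk.injEq, mul_neg, neg_neg]
        constructor <;> field_simp
    · rintro ⟨⟨x, y⟩, ⟨hx, hy, hxy⟩, heq⟩
      obtain ⟨rfl, rfl⟩ : -(h * x) = s ∧ h * y = t := by simpa [Prod.ext_iff] using heq
      refine ⟨?_, ?_, by linear_combination -h * hxy⟩
      · exact Cs_shift α (Cs_neg α ho hfpos hf2 (Cs_mul α hh hx)) (by omega)
      · exact Cs_shift α (Cs_mul α hh hy) (by omega)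
  have hinj : Set.InjOn (fun q : ZMod p × ZMod p => (-(h * q.1), h * q.2))
      (Msets α (a - ℓ) (b - ℓ)) := by
    rintro ⟨x, y⟩ - ⟨x', y'⟩ - hq
    simp only [Prod.mk.injEq, neg_inj] at hq
    have h1 := mul_left_cancel₀ hh0 hq.1
    have h2 := mul_left_cancel₀ hh0 hq.2
    exact Prod.ext h1 h2
  rw [himg, Set.ncard_image_of_injOn hinj]
  rfl

/-- the finset cyclotomic number equals the set version -/
lemma N_eq_Ms (ho : orderOf α = 8 * f) (hfpos : 0 < f) (i j : ℤ) :
    (Finset.filter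
      (fun uv : ℕ × ℕ => (1 : ZMod p) + ((α ^ (8 * (uv.1 : ℤ) + i) : (ZMod p)ˣ) : ZMod p)
        = ((α ^ (8 * (uv.2 : ℤ) + j) : (ZMod p)ˣ) : ZMod p))
      (Finset.range f ×ˢ Finset.range f)).card = Ms α i j := by
  set s := Finset.filter
      (fun uv : ℕ × ℕ => (1 : ZMod p) + ((α ^ (8 * (uv.1 : ℤ) + i) : (ZMod p)ˣ) : ZMod p)
        = ((α ^ (8 * (uv.2 : ℤ) + j) : (ZMod p)ˣ) : ZMod p))
      (Finset.range f ×ˢ Finset.range f) with hs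
  have hred : ∀ (k : ℤ) (c : ℤ), ∃ u : ℕ, u < f ∧ E α (8 * (u : ℤ) + c) = E α (8 * k + c) := by
    intro k c
    have hfz : (f : ℤ) ≠ 0 := by exact_mod_cast hfpos.ne'
    refine ⟨(k % f).toNat, ?_, ?_⟩
    · have h1 : 0 ≤ k % f := Int.emod_nonneg k hfz
      have h2 : k % f < f := Int.emod_lt_of_pos k (by exact_mod_cast hfpos)
      omega
    · rw [E_eq_E α ho]
      refine ⟨-(k / f), ?_⟩
      have h1 : 0 ≤ k % f := Int.emod_nonneg k hfz
      have h2 : ((k % f).toNat : ℤ) = k % f := Int.toNat_of_nonneg h1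
      rw [h2]
      have := Int.emod_def k f
      linarith [this]
  have hsmall : ∀ (c : ℤ) (u u' : ℕ), u < f → u' < f →
      E α (8 * (u : ℤ) + c) = E α (8 * (u' : ℤ) + c) → u = u' := by
    intro c u u' hu hu' he
    rw [E_eq_E α ho] at he
    rcases eq_or_ne u u' with h | h
    · exact h
    have hd : (f : ℤ) ∣ (u : ℤ) - (u' : ℤ) := by
      obtain ⟨k, hk⟩ := he
      exact ⟨k, by linarith⟩
    have habs : (f : ℤ) ∣ |(u : ℤ) - (u' : ℤ)| := (dvd_abs _ _).mpr hd
    have hpos : (0 : ℤ) < |(u : ℤ) - (u' : ℤ)| := abs_pos.mpr (by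
      intro h0; apply h; omega)
    have := Int.le_of_dvd hpos habs
    have := abs_lt.mpr (show -(f:ℤ) < (u:ℤ) - u' ∧ (u:ℤ) - u' < f by omega)
    omega
  have himg : Msets α i j
      = (fun uv : ℕ × ℕ => (E α (8 * (uv.1 : ℤ) + i), E α (8 * (uv.2 : ℤ) + j))) '' ↑s := by
    ext ⟨x, y⟩
    constructor
    · rintro ⟨⟨v, rfl⟩, ⟨w, rfl⟩, hxy⟩
      obtain ⟨u, hu, hue⟩ := hred v i
      obtain ⟨u', hu', hue'⟩ := hred w j
      refine ⟨(u, u'), ?_, ?_⟩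
      · simp only [hs, Finset.coe_filter, Finset.mem_product, Finset.mem_range,
          Set.mem_setOf_eq]
        refine ⟨⟨hu, hu'⟩, ?_⟩
        show (1 : ZMod p) + E α (8 * (u:ℤ) + i) = E α (8 * (u':ℤ) + j)
        rw [hue, hue']; exact hxy
      · simp only [Prod.mk.injEq]
        exact ⟨hue, hue'⟩
    · rintro ⟨⟨u, u'⟩, hmem, heq⟩
      simp only [hs, Finset.coe_filter, Finset.mem_product, Finset.mem_range,
        Set.mem_setOf_eq] at hmem
      obtain ⟨⟨hu, hu'⟩, hcond⟩ := hmem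
      obtain ⟨rfl, rfl⟩ : E α (8 * (u:ℤ) + i) = x ∧ E α (8 * (u':ℤ) + j) = y := by
        simpa [Prod.ext_iff] using heq
      exact ⟨⟨u, rfl⟩, ⟨u', rfl⟩, hcond⟩
  have hinj : Set.InjOn
      (fun uv : ℕ × ℕ => (E α (8 * (uv.1 : ℤ) + i), E α (8 * (uv.2 : ℤ) + j))) ↑s := by
    rintro ⟨u, v⟩ hm ⟨u', v'⟩ hm' hq
    simp only [hs, Finset.coe_filter, Finset.mem_product, Finset.mem_range,
      Set.mem_setOf_eq] at hm hm'
    simp only [Prod.mk.injEq] at hq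
    exact Prod.ext (hsmall i _ _ hm.1.1 hm'.1.1 hq.1) (hsmall j _ _ hm.1.2 hm'.1.2 hq.2)
  unfold Ms
  rw [himg, Set.ncard_image_of_injOn hinj, Set.ncard_coe_finset]

/-- main counting decomposition -/
lemma final_count (ho : orderOf α = 8 * f) (hfpos : 0 < f) (hf2 : 2 ∣ f)
    (ℓ : ℤ) (h : ZMod p) (hh : h ∈ Cs α ℓ) :
    {st : ZMod p × ZMod p | st.1 ∈ Cs α 0 ∪ Cs α 5 ∧ st.2 ∈ Cs α 1 ∪ Cs α 4
        ∧ st.1 + st.2 = h}.ncard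
      = Ms α (0 - ℓ) (1 - ℓ) + Ms α (0 - ℓ) (4 - ℓ)
        + Ms α (5 - ℓ) (1 - ℓ) + Ms α (5 - ℓ) (4 - ℓ) := by
  set A : ℤ → ℤ → Set (ZMod p × ZMod p) :=
    fun a b => {st | st.1 ∈ Cs α a ∧ st.2 ∈ Cs α b ∧ st.1 + st.2 = h} with hA
  have hu : {st : ZMod p × ZMod p | st.1 ∈ Cs α 0 ∪ Cs α 5 ∧ st.2 ∈ Cs α 1 ∪ Cs α 4
      ∧ st.1 + st.2 = h} = A 0 1 ∪ A 0 4 ∪ A 5 1 ∪ A 5 4 := by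
    ext ⟨st1, st2⟩
    simp only [hA, Set.mem_union, Set.mem_setOf_eq]
    tauto
  have hdis : ∀ a b a' b' : ℤ, a % 8 ≠ a' % 8 ∨ b % 8 ≠ b' % 8 →
      Disjoint (A a b) (A a' b') := by
    intro a b a' b' hx
    rw [Set.disjoint_left]
    rintro ⟨s, t⟩ ⟨hs, ht, -⟩ ⟨hs', ht', -⟩
    rcases hx with hx | hx
    · exact Cs_disj α ho hx hs hs'
    · exact Cs_disj α ho hx ht ht'
  have d1 : Disjoint (A 0 1 ∪ A 0 4 ∪ A 5 1) (A 5 4) := by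
    rw [Set.disjoint_union_left, Set.disjoint_union_left]
    exact ⟨⟨hdis _ _ _ _ (by norm_num), hdis _ _ _ _ (by norm_num)⟩,
      hdis _ _ _ _ (by norm_num)⟩
  have d2 : Disjoint (A 0 1 ∪ A 0 4) (A 5 1) := by
    rw [Set.disjoint_union_left]
    exact ⟨hdis _ _ _ _ (by norm_num), hdis _ _ _ _ (by norm_num)⟩
  have d3 : Disjoint (A 0 1) (A 0 4) := hdis _ _ _ _ (by norm_num)
  rw [hu, Set.ncard_union_eq d1, Set.ncard_union_eq d2, Set.ncard_union_eq d3]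
  have c : ∀ a b : ℤ, (A a b).ncard = Ms α (a - ℓ) (b - ℓ) := by
    intro a b
    rw [hA]
    exact count_pairs α ho hfpos hf2 a b ℓ h hh
  rw [c 0 1, c 0 4, c 5 1, c 5 4]

end S14

/-- Let `p ≡ 1 (mod 16)` be prime, `α` a generator of `(ℤ/pℤ)ˣ`, `C i` the order-8
cyclotomic cosets and `N i j` the order-8 cyclotomic numbers (indices mod 8). With
`S = C 0 ∪ C 5` and `T = C 1 ∪ C 4`, for `0 ≤ ℓ ≤ 7` and `h ∈ C ℓ` the number of
pairs `(s, t) ∈ S × T` with `s + t = h` equals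
`y ℓ = N 1 ℓ + N 4 ℓ + N 4 (ℓ+ 3) + N 7 (ℓ+ 3)`, and `y ℓ = y (ℓ+4)` for `0 ≤ ℓ ≤ 3`. -/
theorem stmt_14 (p : ℕ) (hp : p.Prime) (h16 : p % 16 = 1)
    (α : (ZMod p)ˣ) (hα : ∀ x : (ZMod p)ˣ, x ∈ Subgroup.zpowers α)
    (C : ℤ → Set (ZMod p))
    (hC : ∀ i : ℤ, C i = {x : ZMod p | ∃ v : ℤ, x = ((α ^ (8 * v + i) : (ZMod p)ˣ) : ZMod p)})
    (N : ℤ → ℤ → ℕ)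
    (hN : ∀ i j : ℤ, N i j = (Finset.filter
      (fun uv : ℕ × ℕ => (1 : ZMod p) + ((α ^ (8 * (uv.1 : ℤ) + i) : (ZMod p)ˣ) : ZMod p)
        = ((α ^ (8 * (uv.2 : ℤ) + j) : (ZMod p)ˣ) : ZMod p))
      (Finset.range ((p - 1) / 8) ×ˢ Finset.range ((p - 1) / 8))).card)
    (S T : Set (ZMod p)) (hS : S = C 0 ∪ C 5) (hT : T = C 1 ∪ C 4)
    (y : ℤ → ℕ)
    (hy : ∀ ℓ : ℤ, y ℓ = N 1 (ℓ % 8) + N 4 (ℓ % 8)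
      + N 4 ((ℓ + 3) % 8) + N 7 ((ℓ + 3) % 8)) :
    (∀ ℓ : ℤ, 0 ≤ ℓ → ℓ ≤ 7 → ∀ h ∈ C ℓ,
      {st : ZMod p × ZMod p | st.1 ∈ S ∧ st.2 ∈ T ∧ st.1 + st.2 = h}.ncard = y ℓ) ∧
    (∀ ℓ : ℤ, 0 ≤ ℓ → ℓ ≤ 3 → y ℓ = y (ℓ + 4)) := by
  haveI : Fact p.Prime := ⟨hp⟩
  have hp2 : 2 ≤ p := hp.two_le
  set f := (p - 1) / 8 with hfdef
  have hf8 : p - 1 = 8 * f := by omega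
  have hfpos : 0 < f := by omega
  have hf2 : 2 ∣ f := by omega
  have ho : orderOf α = 8 * f := by
    rw [orderOf_eq_card_of_forall_mem_zpowers hα, Nat.card_eq_fintype_card,
      ZMod.card_units_eq_totient, Nat.totient_prime hp]
    omega
  have hCs : C = S14.Cs α := by
    funext i
    rw [hC]
    rfl
  have hNM : ∀ i j : ℤ, N i j = S14.Ms α i j := by
    intro i j
    rw [hN]
    exact S14.N_eq_Ms α ho hfpos i j
  constructor
  · intro ℓ hl0 hl7 h hh
    rw [hCs] at hh
    rw [hS, hT, hCs, hy ℓ]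
    rw [S14.final_count α ho hfpos hf2 ℓ h hh]
    have t1 : S14.Ms α (0 - ℓ) (1 - ℓ) = N 1 (ℓ % 8) := by
      rw [hNM]
      exact S14.Ms_ABcong α ho hfpos hf2 _ _ (by omega) (by omega)
    have t2 : S14.Ms α (0 - ℓ) (4 - ℓ) = N 4 (ℓ % 8) := by
      rw [hNM]
      exact S14.Ms_ABcong α ho hfpos hf2 _ _ (by omega) (by omega)
    have t3 : S14.Ms α (5 - ℓ) (1 - ℓ) = N 4 ((ℓ + 3) % 8) := by
      rw [hNM]
      exact S14.Ms_ABcong α ho hfpos hf2 _ _ (by omega) (by omega)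
    have t4 : S14.Ms α (5 - ℓ) (4 - ℓ) = N 7 ((ℓ + 3) % 8) := by
      rw [hNM]
      exact S14.Ms_ABcong α ho hfpos hf2 _ _ (by omega) (by omega)
    rw [t1, t2, t3, t4]
  · intro ℓ hl0 hl3
    rw [hy ℓ, hy (ℓ + 4), show ℓ + 4 + 3 = ℓ + 7 by ring]
    simp only [hNM]
    have e1 : S14.Ms α 1 (ℓ % 8) = S14.Ms α 7 ((ℓ + 7) % 8) :=
      S14.Ms_Acong α _ _ (by omega) (by omega)
    have e2 : S14.Ms α 4 (ℓ % 8) = S14.Ms α 4 ((ℓ + 4) % 8) :=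
      S14.Ms_Acong α _ _ (by omega) (by omega)
    have e3 : S14.Ms α 4 ((ℓ + 3) % 8) = S14.Ms α 4 ((ℓ + 7) % 8) :=
      S14.Ms_Acong α _ _ (by omega) (by omega)
    have e4 : S14.Ms α 7 ((ℓ + 3) % 8) = S14.Ms α 1 ((ℓ + 4) % 8) :=
      S14.Ms_Acong α _ _ (by omega) (by omega)
    rw [e1, e2, e3, e4]
    omega
end

section
/- Let p be a prime with p ≡ 1 (mod 16), let α be a generator of the multiplicative group of ℤ/pℤ, let C_i (indices mod 8) be the order-8 cyclotomic cosets, and let (i,j) (indices mod 8) be the order-8 cyclotomic numbers. Let S = C_0 ∪ C_3 and T = C_4 ∪ C_7. Then for every ℓ with 0 ≤ ℓ ≤ 7 and every h ∈ C_ℓ, the number of pairs (s,t) with s ∈ S, t ∈ T, and s + t = h equals z_ℓ := (4,ℓ) + (7,ℓ) + (1,ℓ−3) + (4,ℓ−3) (indices taken mod 8); moreover z_ℓ = z_{ℓ+4} for 0 ≤ ℓ ≤ 3. -/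
/-- Let `p ≡ 1 (mod 16)` be prime, `α` a generator of `(ℤ/pℤ)ˣ`, `C i` the order-8
cyclotomic cosets and `N i j` the order-8 cyclotomic numbers (indices mod 8). With
`S = C 0 ∪ C 3` and `T = C 4 ∪ C 7`, for `0 ≤ ℓ ≤ 7` and `h ∈ C ℓ` the number of
pairs `(s, t) ∈ S × T` with `s + t = h` equals
`z ℓ = N 4 ℓ + N 7 ℓ + N 1 (ℓ- 3) + N 4 (ℓ- 3)`, and `z ℓ = z (ℓ+4)` for `0 ≤ ℓ ≤ 3`. -/
theorem stmt_15 (p : ℕ) (hp : p.Prime) (h16 : p % 16 = 1)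
    (α : (ZMod p)ˣ) (hα : ∀ x : (ZMod p)ˣ, x ∈ Subgroup.zpowers α)
    (C : ℤ → Set (ZMod p))
    (hC : ∀ i : ℤ, C i = {x : ZMod p | ∃ v : ℤ, x = ((α ^ (8 * v + i) : (ZMod p)ˣ) : ZMod p)})
    (N : ℤ → ℤ → ℕ)
    (hN : ∀ i j : ℤ, N i j = (Finset.filter
      (fun uv : ℕ × ℕ => (1 : ZMod p) + ((α ^ (8 * (uv.1 : ℤ) + i) : (ZMod p)ˣ) : ZMod p)
        = ((α ^ (8 * (uv.2 : ℤ) + j) : (ZMod p)ˣ) : ZMod p))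
      (Finset.range ((p - 1) / 8) ×ˢ Finset.range ((p - 1) / 8))).card)
    (S T : Set (ZMod p)) (hS : S = C 0 ∪ C 3) (hT : T = C 4 ∪ C 7)
    (z : ℤ → ℕ)
    (hz : ∀ ℓ : ℤ, z ℓ = N 4 (ℓ % 8) + N 7 (ℓ % 8)
      + N 1 ((ℓ - 3) % 8) + N 4 ((ℓ - 3) % 8)) :
    (∀ ℓ : ℤ, 0 ≤ ℓ → ℓ ≤ 7 → ∀ h ∈ C ℓ,
      {st : ZMod p × ZMod p | st.1 ∈ S ∧ st.2 ∈ T ∧ st.1 + st.2 = h}.ncard = z ℓ) ∧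
    (∀ ℓ : ℤ, 0 ≤ ℓ → ℓ ≤ 3 → z ℓ = z (ℓ + 4)) := by
  haveI : Fact p.Prime := ⟨hp⟩
  haveI : NeZero p := ⟨hp.pos.ne'⟩
  have hp2 : 2 ≤ p := hp.two_le
  set f : ℕ := (p - 1) / 8 with hfdef
  have hf8 : p - 1 = 8 * f := by omega
  have hfpos : 0 < f := by omega
  have horder : orderOf α = p - 1 := by
    rw [orderOf_eq_card_of_forall_mem_zpowers hα, Nat.card_eq_fintype_card, ZMod.card_units]
  have hcast : (orderOf α : ℤ) = 8 * (f : ℤ) := by rw [horder]; omega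
  have hzpow : ∀ m n : ℤ, α ^ m = α ^ n ↔ (8 * (f:ℤ)) ∣ m - n := by
    intro m n
    have h1 : α ^ m = α ^ n ↔ α ^ (m - n) = 1 := by rw [zpow_sub, mul_inv_eq_one]
    rw [h1, ← orderOf_dvd_iff_zpow_eq_one, hcast]
  have hmem : ∀ (i : ℤ) (x : ZMod p), x ∈ C i ↔
      ∃ n : ℤ, x = ((α ^ n : (ZMod p)ˣ) : ZMod p) ∧ (8:ℤ) ∣ n - i := by
    intro i x
    simp only [hC, Set.mem_setOf_eq]
    constructor
    · rintro ⟨v, rfl⟩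
      exact ⟨8 * v + i, rfl, ⟨v, by ring⟩⟩
    · rintro ⟨n, rfl, v, hv⟩
      exact ⟨v, by rw [show (8 * v + i : ℤ) = n by omega]⟩
  have hne0 : ∀ (i : ℤ) (x : ZMod p), x ∈ C i → x ≠ 0 := by
    intro i x hx
    obtain ⟨n, rfl, -⟩ := (hmem i x).1 hx
    exact Units.ne_zero _
  have hmul : ∀ (i j : ℤ) (x y : ZMod p), x ∈ C i → y ∈ C j → x * y ∈ C (i + j) := by
    intro i j x y hx hy
    obtain ⟨n, rfl, hn⟩ := (hmem i x).1 hx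
    obtain ⟨m, rfl, hm⟩ := (hmem j y).1 hy
    exact (hmem _ _).2 ⟨n + m, by rw [zpow_add, Units.val_mul], by omega⟩
  have hinv : ∀ (i : ℤ) (x : ZMod p), x ∈ C i → x⁻¹ ∈ C (-i) := by
    intro i x hx
    obtain ⟨n, rfl, hn⟩ := (hmem i x).1 hx
    refine (hmem _ _).2 ⟨-n, ?_, by omega⟩
    rw [zpow_neg, Units.val_inv_eq_inv_val]
  -- -1 ∈ C 0
  have hm1 : (-1 : ZMod p) ∈ C 0 := by
    set k : ℕ := (p - 1) / 16 with hk
    have hkf : 8 * f = 16 * k := by omega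
    have h1 : α ^ (16 * (k:ℤ)) = α ^ (0:ℤ) := (hzpow _ _).2 ⟨1, by omega⟩
    have huu : α ^ (8*(k:ℤ)) * α ^ (8*(k:ℤ)) = 1 := by
      rw [← zpow_add, show (8*(k:ℤ) + 8*(k:ℤ)) = 16 * (k:ℤ) by ring, h1, zpow_zero]
    have hval : ((α ^ (8*(k:ℤ)) : (ZMod p)ˣ) : ZMod p) = -1 := by
      have hsq : ((α ^ (8*(k:ℤ)) : (ZMod p)ˣ) : ZMod p) * ((α ^ (8*(k:ℤ)) : (ZMod p)ˣ) : ZMod p) = 1 := by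
        rw [← Units.val_mul, huu, Units.val_one]
      rcases mul_self_eq_one_iff.1 hsq with h | h
      · exfalso
        have hu1 : α ^ (8*(k:ℤ)) = α ^ (0:ℤ) := Units.ext (by rw [h, zpow_zero, Units.val_one])
        rw [hzpow] at hu1
        have h8k : (8*(k:ℤ) - 0) = 0 :=
          Int.eq_zero_of_abs_lt_dvd hu1 (by rw [abs_lt]; constructor <;> omega)
        omega
      · exact h
    exact (hmem 0 _).2 ⟨8*(k:ℤ), hval.symm, by omega⟩
  have hneg : ∀ (i : ℤ) (x : ZMod p), x ∈ C i → -x ∈ C i := by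
    intro i x hx
    have := hmul 0 i (-1) x hm1 hx
    rw [zero_add, neg_one_mul] at this
    exact this
  have hCcongr : ∀ i j : ℤ, i % 8 = j % 8 → C i = C j := by
    intro i j hij
    ext x
    rw [hmem, hmem]
    constructor <;> rintro ⟨n, rfl, hd⟩ <;> exact ⟨n, rfl, by omega⟩
  have hCdisj : ∀ (i j : ℤ) (x : ZMod p), x ∈ C i → x ∈ C j → (8:ℤ) ∣ i - j := by
    intro i j x hx hy
    obtain ⟨n, rfl, hn⟩ := (hmem i _).1 hx
    obtain ⟨m, hm, hm8⟩ := (hmem j _).1 hy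
    have he : α ^ n = α ^ m := Units.ext hm
    rw [hzpow] at he
    have h8 : (8:ℤ) ∣ n - m := dvd_trans ⟨(f:ℤ), by ring⟩ he
    omega

  have hCc : ∀ i j : ℤ, i = j → C i = C j := fun i j hij => by rw [hij]
  -- generic bijection helper
  have bijcard : ∀ {X Y : Type} (A : Set X) (B : Set Y) (e : X → Y),
      Set.InjOn e A → e '' A = B → A.ncard = B.ncard := by
    intro X Y A B e hi him
    rw [← him, Set.ncard_image_of_injOn hi]
  -- symmetry
  have key_symm : ∀ a b : ℤ,
      {xy : ZMod p × ZMod p | xy.1 ∈ C a ∧ xy.2 ∈ C b ∧ (1:ZMod p) + xy.1 = xy.2}.ncard =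
      {xy : ZMod p × ZMod p | xy.1 ∈ C b ∧ xy.2 ∈ C a ∧ (1:ZMod p) + xy.1 = xy.2}.ncard := by
    intro a b
    apply bijcard _ _ (fun xy => (-xy.2, -xy.1))
    · rintro ⟨x, y⟩ - ⟨x', y'⟩ - heq
      simp only [Prod.mk.injEq, neg_inj] at heq
      simp [heq.1, heq.2, Prod.ext_iff]
    · ext ⟨u, w⟩
      simp only [Set.mem_image, Set.mem_setOf_eq, Prod.mk.injEq]
      constructor
      · rintro ⟨⟨x, y⟩, ⟨hx, hy, hxy⟩, h1, h2⟩
        refine ⟨?_, ?_, ?_⟩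
        · rw [← h1]; exact hneg _ _ hy
        · rw [← h2]; exact hneg _ _ hx
        · rw [← h1, ← h2]; linear_combination hxy
      · rintro ⟨hu, hw, huw⟩
        exact ⟨(-w, -u), ⟨hneg _ _ hw, hneg _ _ hu, by linear_combination huw⟩, by ring, by ring⟩
  -- inversion: M a b = M (-a) (b-a)
  have key_inv : ∀ a b : ℤ,
      {xy : ZMod p × ZMod p | xy.1 ∈ C a ∧ xy.2 ∈ C b ∧ (1:ZMod p) + xy.1 = xy.2}.ncard =
      {xy : ZMod p × ZMod p | xy.1 ∈ C (-a) ∧ xy.2 ∈ C (b - a) ∧ (1:ZMod p) + xy.1 = xy.2}.ncard := by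
    intro a b
    apply bijcard _ _ (fun xy => (xy.1⁻¹, xy.2 * xy.1⁻¹))
    · rintro ⟨x, y⟩ ⟨hx, hy, hxy⟩ ⟨x', y'⟩ ⟨hx', hy', hxy'⟩ heq
      simp only [Prod.mk.injEq] at heq
      have hx0 : x ≠ 0 := hne0 _ _ hx
      have hx0' : x' ≠ 0 := hne0 _ _ hx'
      have h1 : x = x' := inv_injective heq.1
      have h2 : y = y' := by
        have := heq.2
        rw [h1] at this
        exact mul_right_cancel₀ (inv_ne_zero hx0') this
      simp [h1, h2, Prod.ext_iff]
    · ext ⟨u, w⟩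
      simp only [Set.mem_image, Set.mem_setOf_eq, Prod.mk.injEq]
      constructor
      · rintro ⟨⟨x, y⟩, ⟨hx, hy, hxy⟩, h1, h2⟩
        have hx0 : x ≠ 0 := hne0 _ _ hx
        refine ⟨?_, ?_, ?_⟩
        · rw [← h1]; exact hinv _ _ hx
        · rw [← h2]
          have := hmul b (-a) y x⁻¹ hy (hinv _ _ hx)
          rwa [hCc (b + -a) (b - a) (by ring)] at this
        · rw [← h1, ← h2]; field_simp; linear_combination hxy
      · rintro ⟨hu, hw, huw⟩
        have hu0 : u ≠ 0 := hne0 _ _ hu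
        refine ⟨(u⁻¹, w * u⁻¹), ⟨?_, ?_, ?_⟩, by simp, ?_⟩
        · have := hinv _ _ hu
          rwa [hCc (- -a) a (by ring)] at this
        · have := hmul (b - a) (- -a) w u⁻¹ hw (hinv _ _ hu)
          rwa [hCc (b - a + - -a) b (by ring)] at this
        · field_simp; linear_combination huw
        · field_simp

  -- counting lemma: pairs summing to h ∈ C ℓ
  have key_count : ∀ (a b ℓ : ℤ) (h : ZMod p), h ∈ C ℓ →
      {st : ZMod p × ZMod p | st.1 ∈ C a ∧ st.2 ∈ C b ∧ st.1 + st.2 = h}.ncard =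
      {xy : ZMod p × ZMod p | xy.1 ∈ C (a - ℓ) ∧ xy.2 ∈ C (b - ℓ) ∧ (1:ZMod p) + xy.1 = xy.2}.ncard := by
    intro a b ℓ h hh
    have hh0 : h ≠ 0 := hne0 _ _ hh
    have hhinv : h⁻¹ ∈ C (-ℓ) := hinv _ _ hh
    apply bijcard _ _ (fun st => (-(st.1 * h⁻¹), st.2 * h⁻¹))
    · rintro ⟨s, t⟩ - ⟨s', t'⟩ - heq
      simp only [Prod.mk.injEq, neg_inj] at heq
      have h1 := mul_right_cancel₀ (inv_ne_zero hh0) heq.1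
      have h2 := mul_right_cancel₀ (inv_ne_zero hh0) heq.2
      simp [h1, h2, Prod.ext_iff]
    · ext ⟨x, y⟩
      simp only [Set.mem_image, Set.mem_setOf_eq, Prod.mk.injEq]
      constructor
      · rintro ⟨⟨s, t⟩, ⟨hs, ht, hst⟩, h1, h2⟩
        refine ⟨?_, ?_, ?_⟩
        · rw [← h1]
          have := hneg _ _ (hmul a (-ℓ) s h⁻¹ hs hhinv)
          rwa [hCc (a + -ℓ) (a - ℓ) (by ring)] at this
        · rw [← h2]
          have := hmul b (-ℓ) t h⁻¹ ht hhinv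
          rwa [hCc (b + -ℓ) (b - ℓ) (by ring)] at this
        · rw [← h1, ← h2]; field_simp; linear_combination -hst
      · rintro ⟨hx, hy, hxy⟩
        refine ⟨(-(x * h), y * h), ⟨?_, ?_, ?_⟩, ?_, ?_⟩
        · have := hneg _ _ (hmul (a - ℓ) ℓ x h hx hh)
          rwa [hCc (a - ℓ + ℓ) a (by ring)] at this
        · have := hmul (b - ℓ) ℓ y h hy hh
          rwa [hCc (b - ℓ + ℓ) b (by ring)] at this
        · linear_combination (-h) * hxy
        · field_simp
        · field_simp
  -- N in terms of set counts
  have hrep : ∀ (c : ℤ) (u u' : ℕ), u < f → u' < f →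
      ((α ^ (8*(u:ℤ)+c) : (ZMod p)ˣ) : ZMod p) = ((α ^ (8*(u':ℤ)+c) : (ZMod p)ˣ) : ZMod p) → u = u' := by
    intro c u u' hu hu' heq
    have h1 : α ^ (8*(u:ℤ)+c) = α ^ (8*(u':ℤ)+c) := Units.ext heq
    rw [hzpow] at h1
    obtain ⟨d, hd⟩ := h1
    have h2 : ((f:ℤ)) ∣ ((u:ℤ) - (u':ℤ)) := ⟨d, by linarith⟩
    have h3 : ((u:ℤ) - (u':ℤ)) = 0 :=
      Int.eq_zero_of_abs_lt_dvd h2 (by rw [abs_lt]; constructor <;> omega)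
    omega
  have hsurj : ∀ (c : ℤ) (x : ZMod p), x ∈ C c →
      ∃ u : ℕ, u < f ∧ x = ((α ^ (8*(u:ℤ)+c) : (ZMod p)ˣ) : ZMod p) := by
    intro c x hx
    obtain ⟨n, rfl, v, hv⟩ := (hmem c x).1 hx
    have hf0 : (0:ℤ) < (f:ℤ) := by exact_mod_cast hfpos
    have h0 : 0 ≤ v % (f:ℤ) := Int.emod_nonneg v hf0.ne'
    have h1 : v % (f:ℤ) < (f:ℤ) := Int.emod_lt_of_pos v hf0
    refine ⟨(v % (f:ℤ)).toNat, by omega, ?_⟩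
    have ht : (((v % (f:ℤ)).toNat : ℤ)) = v % (f:ℤ) := Int.toNat_of_nonneg h0
    have hm := Int.emod_add_mul_ediv v (f:ℤ)
    have : α ^ n = α ^ (8*(((v % (f:ℤ)).toNat:ℤ))+c) := by
      rw [hzpow, ht]
      exact ⟨v / (f:ℤ), by linear_combination hv - 8 * hm⟩
    rw [this]
  have key_N : ∀ a b : ℤ, N a b =
      {xy : ZMod p × ZMod p | xy.1 ∈ C a ∧ xy.2 ∈ C b ∧ (1:ZMod p) + xy.1 = xy.2}.ncard := by
    intro a b
    rw [hN]
    rw [← Set.ncard_coe_finset]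
    apply bijcard _ _ (fun uv : ℕ × ℕ =>
      (((α ^ (8*(uv.1:ℤ)+a) : (ZMod p)ˣ) : ZMod p), ((α ^ (8*(uv.2:ℤ)+b) : (ZMod p)ˣ) : ZMod p)))
    · rintro ⟨u, v⟩ huv ⟨u', v'⟩ huv' heq
      simp only [Finset.coe_filter, Set.mem_setOf_eq, Finset.mem_product, Finset.mem_range] at huv huv'
      simp only [Prod.mk.injEq] at heq
      have e1 := hrep a u u' huv.1.1 huv'.1.1 heq.1
      have e2 := hrep b v v' huv.1.2 huv'.1.2 heq.2
      simp [e1, e2, Prod.ext_iff]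
    · ext ⟨x, y⟩
      simp only [Set.mem_image, Finset.coe_filter, Set.mem_setOf_eq, Finset.mem_product,
        Finset.mem_range, Prod.mk.injEq]
      constructor
      · rintro ⟨⟨u, v⟩, ⟨⟨hu, hv⟩, hcond⟩, h1, h2⟩
        refine ⟨?_, ?_, ?_⟩
        · rw [← h1]; exact (hmem a _).2 ⟨8*(u:ℤ)+a, rfl, by omega⟩
        · rw [← h2]; exact (hmem b _).2 ⟨8*(v:ℤ)+b, rfl, by omega⟩
        · rw [← h1, ← h2]; exact hcond
      · rintro ⟨hx, hy, hxy⟩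
        obtain ⟨u, hu, rfl⟩ := hsurj a x hx
        obtain ⟨v, hv, rfl⟩ := hsurj b y hy
        exact ⟨(u, v), ⟨⟨hu, hv⟩, hxy⟩, rfl, rfl⟩
  -- z in terms of set counts
  have hzM : ∀ ℓ : ℤ, z ℓ =
      {xy : ZMod p × ZMod p | xy.1 ∈ C (-ℓ) ∧ xy.2 ∈ C (4 - ℓ) ∧ (1:ZMod p) + xy.1 = xy.2}.ncard +
      {xy : ZMod p × ZMod p | xy.1 ∈ C (-ℓ) ∧ xy.2 ∈ C (7 - ℓ) ∧ (1:ZMod p) + xy.1 = xy.2}.ncard +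
      {xy : ZMod p × ZMod p | xy.1 ∈ C (3 - ℓ) ∧ xy.2 ∈ C (4 - ℓ) ∧ (1:ZMod p) + xy.1 = xy.2}.ncard +
      {xy : ZMod p × ZMod p | xy.1 ∈ C (3 - ℓ) ∧ xy.2 ∈ C (7 - ℓ) ∧ (1:ZMod p) + xy.1 = xy.2}.ncard := by
    intro ℓ
    rw [hz ℓ]
    have e1 : N 4 (ℓ % 8) =
        {xy : ZMod p × ZMod p | xy.1 ∈ C (-ℓ) ∧ xy.2 ∈ C (4 - ℓ) ∧ (1:ZMod p) + xy.1 = xy.2}.ncard := by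
      rw [key_N, hCcongr (ℓ % 8) ℓ (by omega), key_symm, key_inv]
    have e2 : N 7 (ℓ % 8) =
        {xy : ZMod p × ZMod p | xy.1 ∈ C (-ℓ) ∧ xy.2 ∈ C (7 - ℓ) ∧ (1:ZMod p) + xy.1 = xy.2}.ncard := by
      rw [key_N, hCcongr (ℓ % 8) ℓ (by omega), key_symm, key_inv]
    have e3 : N 1 ((ℓ - 3) % 8) =
        {xy : ZMod p × ZMod p | xy.1 ∈ C (3 - ℓ) ∧ xy.2 ∈ C (4 - ℓ) ∧ (1:ZMod p) + xy.1 = xy.2}.ncard := by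
      rw [key_N, hCcongr ((ℓ - 3) % 8) (ℓ - 3) (by omega), key_symm, key_inv,
        hCc (-(ℓ - 3)) (3 - ℓ) (by ring), hCc (1 - (ℓ - 3)) (4 - ℓ) (by ring)]
    have e4 : N 4 ((ℓ - 3) % 8) =
        {xy : ZMod p × ZMod p | xy.1 ∈ C (3 - ℓ) ∧ xy.2 ∈ C (7 - ℓ) ∧ (1:ZMod p) + xy.1 = xy.2}.ncard := by
      rw [key_N, hCcongr ((ℓ - 3) % 8) (ℓ - 3) (by omega), key_symm, key_inv,
        hCc (-(ℓ - 3)) (3 - ℓ) (by ring), hCc (4 - (ℓ - 3)) (7 - ℓ) (by ring)]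
    omega
  constructor
  · -- main count
    intro ℓ h0 h7 h hh
    have hsplit : {st : ZMod p × ZMod p | st.1 ∈ S ∧ st.2 ∈ T ∧ st.1 + st.2 = h} =
        ({st : ZMod p × ZMod p | st.1 ∈ C 0 ∧ st.2 ∈ C 4 ∧ st.1 + st.2 = h} ∪
         {st : ZMod p × ZMod p | st.1 ∈ C 0 ∧ st.2 ∈ C 7 ∧ st.1 + st.2 = h}) ∪
        ({st : ZMod p × ZMod p | st.1 ∈ C 3 ∧ st.2 ∈ C 4 ∧ st.1 + st.2 = h} ∪
         {st : ZMod p × ZMod p | st.1 ∈ C 3 ∧ st.2 ∈ C 7 ∧ st.1 + st.2 = h}) := by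
      rw [hS, hT]
      ext ⟨s, t⟩
      simp only [Set.mem_setOf_eq, Set.mem_union]
      tauto
    have hd1 : ∀ (i j i' j' : ℤ), ¬ ((8:ℤ) ∣ (i - i')) →
        Disjoint {st : ZMod p × ZMod p | st.1 ∈ C i ∧ st.2 ∈ C j ∧ st.1 + st.2 = h}
                 {st : ZMod p × ZMod p | st.1 ∈ C i' ∧ st.2 ∈ C j' ∧ st.1 + st.2 = h} := by
      intro i j i' j' hnd
      rw [Set.disjoint_left]
      rintro ⟨s, t⟩ ⟨hs, -, -⟩ ⟨hs', -, -⟩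
      exact hnd (hCdisj _ _ _ hs hs')
    have hd2 : ∀ (i j i' j' : ℤ), ¬ ((8:ℤ) ∣ (j - j')) →
        Disjoint {st : ZMod p × ZMod p | st.1 ∈ C i ∧ st.2 ∈ C j ∧ st.1 + st.2 = h}
                 {st : ZMod p × ZMod p | st.1 ∈ C i' ∧ st.2 ∈ C j' ∧ st.1 + st.2 = h} := by
      intro i j i' j' hnd
      rw [Set.disjoint_left]
      rintro ⟨s, t⟩ ⟨-, hs, -⟩ ⟨-, hs', -⟩
      exact hnd (hCdisj _ _ _ hs hs')
    rw [hsplit]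
    rw [Set.ncard_union_eq (by
      simp only [Set.disjoint_union_left, Set.disjoint_union_right]
      exact ⟨⟨hd1 0 4 3 4 (by omega), hd1 0 7 3 4 (by omega)⟩,
             ⟨hd1 0 4 3 7 (by omega), hd1 0 7 3 7 (by omega)⟩⟩)
      (Set.toFinite _) (Set.toFinite _),
      Set.ncard_union_eq (hd2 0 4 0 7 (by omega)) (Set.toFinite _) (Set.toFinite _),
      Set.ncard_union_eq (hd2 3 4 3 7 (by omega)) (Set.toFinite _) (Set.toFinite _)]
    rw [key_count 0 4 ℓ h hh, key_count 0 7 ℓ h hh, key_count 3 4 ℓ h hh, key_count 3 7 ℓ h hh,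
      hCc (0 - ℓ) (-ℓ) (by ring), hzM ℓ]
    omega
  · -- z ℓ = z (ℓ + 4)
    intro ℓ h0 h3
    rw [hzM ℓ, hzM (ℓ + 4)]
    have e1 : {xy : ZMod p × ZMod p | xy.1 ∈ C (-(ℓ+4)) ∧ xy.2 ∈ C (4 - (ℓ+4)) ∧ (1:ZMod p) + xy.1 = xy.2}.ncard =
        {xy : ZMod p × ZMod p | xy.1 ∈ C (-ℓ) ∧ xy.2 ∈ C (4 - ℓ) ∧ (1:ZMod p) + xy.1 = xy.2}.ncard := by
      rw [key_symm (-(ℓ+4)) (4-(ℓ+4)), key_inv (4-(ℓ+4)) (-(ℓ+4)),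
        hCcongr (-(4-(ℓ+4))) ℓ (by omega), hCcongr (-(ℓ+4)-(4-(ℓ+4))) 4 (by omega),
        key_inv ℓ 4]
    have e2 : {xy : ZMod p × ZMod p | xy.1 ∈ C (-(ℓ+4)) ∧ xy.2 ∈ C (7 - (ℓ+4)) ∧ (1:ZMod p) + xy.1 = xy.2}.ncard =
        {xy : ZMod p × ZMod p | xy.1 ∈ C (3 - ℓ) ∧ xy.2 ∈ C (4 - ℓ) ∧ (1:ZMod p) + xy.1 = xy.2}.ncard := by
      rw [key_symm (-(ℓ+4)) (7-(ℓ+4)), key_inv (7-(ℓ+4)) (-(ℓ+4)),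
        hCcongr (-(7-(ℓ+4))) (ℓ-3) (by omega), hCcongr (-(ℓ+4)-(7-(ℓ+4))) 1 (by omega),
        key_inv (ℓ-3) 1, hCcongr (-(ℓ-3)) (3-ℓ) (by omega), hCcongr (1-(ℓ-3)) (4-ℓ) (by omega)]
    have e3 : {xy : ZMod p × ZMod p | xy.1 ∈ C (3 - (ℓ+4)) ∧ xy.2 ∈ C (4 - (ℓ+4)) ∧ (1:ZMod p) + xy.1 = xy.2}.ncard =
        {xy : ZMod p × ZMod p | xy.1 ∈ C (-ℓ) ∧ xy.2 ∈ C (7 - ℓ) ∧ (1:ZMod p) + xy.1 = xy.2}.ncard := by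
      rw [key_symm (3-(ℓ+4)) (4-(ℓ+4)), key_inv (4-(ℓ+4)) (3-(ℓ+4)),
        hCcongr (-(4-(ℓ+4))) ℓ (by omega), hCcongr (3-(ℓ+4)-(4-(ℓ+4))) 7 (by omega),
        key_inv ℓ 7]
    have e4 : {xy : ZMod p × ZMod p | xy.1 ∈ C (3 - (ℓ+4)) ∧ xy.2 ∈ C (7 - (ℓ+4)) ∧ (1:ZMod p) + xy.1 = xy.2}.ncard =
        {xy : ZMod p × ZMod p | xy.1 ∈ C (3 - ℓ) ∧ xy.2 ∈ C (7 - ℓ) ∧ (1:ZMod p) + xy.1 = xy.2}.ncard := by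
      rw [key_symm (3-(ℓ+4)) (7-(ℓ+4)), key_inv (7-(ℓ+4)) (3-(ℓ+4)),
        hCcongr (-(7-(ℓ+4))) (ℓ-3) (by omega), hCcongr (3-(ℓ+4)-(7-(ℓ+4))) 4 (by omega),
        key_inv (ℓ-3) 4, hCcongr (-(ℓ-3)) (3-ℓ) (by omega), hCcongr (4-(ℓ-3)) (7-ℓ) (by omega)]
    omega
end
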